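/- arXiv:1110.4511 — 6 statements merged into one kernel-verified Lean document; each statement's English description precedes it below -/
import Mathlib

section
/- If G₁ and G₂ are groups with uncountable strong cofinality, then the direct product G₁ × G₂ has uncountable strong cofinality. -/
open Pointwise

/-- A group has uncountable strong cofinality if every increasing exhaustion
`G = ⋃ₘ Aₘ` satisfies `Aₘᵏ = G` for some `m, k`. -/
def HasUncountableStrongCofinality (G : Type*) [Group G] : Prop :=
  ∀ A : ℕ → Set G, Monotone A → (⋃ m, A m) = Set.univ →
    ∃ m k, A m ^ k = (Set.univ : Set G)

/-- uncountable strong cofinality is preserved by finite direct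
products. -/
theorem uncountable_strong_cofinality_prod
    (G₁ G₂ : Type*) [Group G₁] [Group G₂]
    (h₁ : HasUncountableStrongCofinality G₁)
    (h₂ : HasUncountableStrongCofinality G₂) :
    HasUncountableStrongCofinality (G₁ × G₂) := by
  intro A hmono hunion
  set f : G₁ →* G₁ × G₂ := MonoidHom.inl G₁ G₂ with hf
  set g : G₂ →* G₁ × G₂ := MonoidHom.inr G₁ G₂ with hg
  obtain ⟨m₁, k₁, hk₁⟩ := h₁ (fun m => f ⁻¹' A m)
    (fun a b hab => Set.preimage_mono (hmono hab))
    (by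
      apply Set.eq_univ_of_forall
      intro x
      have : f x ∈ ⋃ m, A m := hunion ▸ Set.mem_univ _
      simpa using this)
  obtain ⟨m₂, k₂, hk₂⟩ := h₂ (fun m => g ⁻¹' A m)
    (fun a b hab => Set.preimage_mono (hmono hab))
    (by
      apply Set.eq_univ_of_forall
      intro x
      have : g x ∈ ⋃ m, A m := hunion ▸ Set.mem_univ _
      simpa using this)
  refine ⟨max m₁ m₂, k₁ + k₂, Set.eq_univ_of_forall fun p => ?_⟩
  have h1 : f p.1 ∈ A (max m₁ m₂) ^ k₁ := by
    have : p.1 ∈ (f ⁻¹' A m₁) ^ k₁ := hk₁ ▸ Set.mem_univ _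
    have hmem : f p.1 ∈ (f '' (f ⁻¹' A m₁)) ^ k₁ := by
      rw [← Set.image_pow]; exact Set.mem_image_of_mem _ this
    exact Set.pow_subset_pow_left
      ((Set.image_preimage_subset _ _).trans (hmono (le_max_left m₁ m₂))) hmem
  have h2 : g p.2 ∈ A (max m₁ m₂) ^ k₂ := by
    have : p.2 ∈ (g ⁻¹' A m₂) ^ k₂ := hk₂ ▸ Set.mem_univ _
    have hmem : g p.2 ∈ (g '' (g ⁻¹' A m₂)) ^ k₂ := by
      rw [← Set.image_pow]; exact Set.mem_image_of_mem _ this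
    exact Set.pow_subset_pow_left
      ((Set.image_preimage_subset _ _).trans (hmono (le_max_right m₁ m₂))) hmem
  have : f p.1 * g p.2 = p := by simp [hf, hg]
  rw [pow_add, ← this]
  exact Set.mul_mem_mul h1 h2
end

section
/- Let N₁, N₂ be sets with N₂ finite of cardinality n, let G₁ ≤ Sym(N₁) and G₂ ≤ Sym(N₂) be permutation groups, and let G = G₁ Wr G₂ be the (permutational) wreath product acting on N₁ × N₂. If G₁ has uncountable strong cofinality and G₂ is finite, then G has uncountable strong cofinality. -/
open Pointwise

namespace USCAux

lemma mem_pow_map {G H : Type*} [Monoid G] [Monoid H] (φ : G →* H) {S : Set G} {T : Set H}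
    (hST : ∀ a ∈ S, φ a ∈ T) : ∀ k x, x ∈ S ^ k → φ x ∈ T ^ k := by
  intro k
  induction k with
  | zero =>
      intro x hx
      rw [pow_zero] at hx ⊢
      rw [Set.mem_one] at hx ⊢
      rw [hx, map_one]
  | succ n ih =>
      intro x hx
      rw [pow_succ] at hx ⊢
      obtain ⟨a, ha, b, hb, rfl⟩ := hx
      rw [map_mul]
      exact Set.mul_mem_mul (ih a ha) (hST b hb)

lemma one_mem_of_cover {G : Type*} [Group G] {A : ℕ → Set G} (hcov : (⋃ m, A m) = Set.univ) :
    ∃ m₀, (1 : G) ∈ A m₀ := by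
  have : (1 : G) ∈ ⋃ m, A m := hcov ▸ Set.mem_univ 1
  simpa using this

lemma of_mulEquiv {G H : Type*} [Group G] [Group H] (e : G ≃* H)
    (h : HasUncountableStrongCofinality G) : HasUncountableStrongCofinality H := by
  intro A hmono hcov
  obtain ⟨m, k, hmk⟩ := h (fun m => (⇑e) ⁻¹' (A m)) (fun a b hab => Set.preimage_mono (hmono hab))
    (by
      ext g; simp only [Set.mem_iUnion, Set.mem_preimage, Set.mem_univ, iff_true]
      have : e g ∈ ⋃ m, A m := hcov ▸ Set.mem_univ _
      simpa using this)
  refine ⟨m, k, Set.eq_univ_of_forall fun h' => ?_⟩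
  have : e.symm h' ∈ (fun m => (⇑e) ⁻¹' (A m)) m ^ k := hmk ▸ Set.mem_univ _
  have := mem_pow_map e.toMonoidHom (S := (⇑e) ⁻¹' (A m)) (T := A m)
    (fun a ha => ha) k _ this
  simpa using this



lemma subsingleton_usc {G : Type*} [Group G] [Subsingleton G] :
    HasUncountableStrongCofinality G := by
  intro A hmono hcov
  have : (1 : G) ∈ ⋃ m, A m := hcov ▸ Set.mem_univ 1
  obtain ⟨m, hm⟩ := Set.mem_iUnion.1 this
  refine ⟨m, 1, ?_⟩
  rw [pow_one]
  exact Set.eq_univ_of_forall fun g => (Subsingleton.elim g 1) ▸ hm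

lemma prod_usc {G H : Type*} [Group G] [Group H]
    (hG : HasUncountableStrongCofinality G) (hH : HasUncountableStrongCofinality H) :
    HasUncountableStrongCofinality (G × H) := by
  intro A hmono hcov
  have hcovm : ∀ x : G × H, ∃ m, x ∈ A m := fun x => Set.mem_iUnion.1 (hcov ▸ Set.mem_univ x)
  obtain ⟨m₀, hm₀⟩ : ∃ m₀, (1 : G × H) ∈ A m₀ := hcovm 1
  set B : ℕ → Set (G × H) := fun m => A (m + m₀) with hB
  have hBone : ∀ m, (1 : G × H) ∈ B m := fun m => hmono (Nat.le_add_left _ _) hm₀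
  have hBmono : Monotone B := fun a b hab => hmono (by omega)
  obtain ⟨mG, kG, hmkG⟩ := hG (fun m => {g | (g, 1) ∈ B m})
    (fun a b hab g hg => hBmono hab hg)
    (Set.eq_univ_of_forall fun g => by
      obtain ⟨m, hm⟩ := hcovm (g, 1)
      exact Set.mem_iUnion.2 ⟨m, hmono (Nat.le_add_right _ _) hm⟩)
  obtain ⟨mH, kH, hmkH⟩ := hH (fun m => {h | ((1 : G), h) ∈ B m})
    (fun a b hab h hh => hBmono hab hh)
    (Set.eq_univ_of_forall fun h => by
      obtain ⟨m, hm⟩ := hcovm (1, h)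
      exact Set.mem_iUnion.2 ⟨m, hmono (Nat.le_add_right _ _) hm⟩)
  set M := max mG mH
  refine ⟨M + m₀, kG + kH, Set.eq_univ_of_forall fun x => ?_⟩
  have h1 : (x.1, (1 : H)) ∈ B M ^ kG := by
    have : x.1 ∈ {g | (g, 1) ∈ B mG} ^ kG := hmkG ▸ Set.mem_univ _
    have := mem_pow_map (MonoidHom.inl G H) (S := {g | (g, 1) ∈ B mG}) (T := B M)
      (fun a ha => hBmono (le_max_left _ _) ha) kG _ this
    simpa using this
  have h2 : ((1 : G), x.2) ∈ B M ^ kH := by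
    have : x.2 ∈ {h | ((1 : G), h) ∈ B mH} ^ kH := hmkH ▸ Set.mem_univ _
    have := mem_pow_map (MonoidHom.inr G H) (S := {h | ((1 : G), h) ∈ B mH}) (T := B M)
      (fun a ha => hBmono (le_max_right _ _) ha) kH _ this
    simpa using this
  have : x ∈ B M ^ (kG + kH) := by
    rw [pow_add]
    have : x = (x.1, (1 : H)) * ((1 : G), x.2) := by simp
    rw [this]
    exact Set.mul_mem_mul h1 h2
  exact this

lemma pi_usc {ι : Type*} [Finite ι] {G : Type*} [Group G]
    (hG : HasUncountableStrongCofinality G) :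
    HasUncountableStrongCofinality (ι → G) := by
  have key : ∀ (α : Type _) [Finite α], HasUncountableStrongCofinality (α → G) := by
    intro α hα
    induction α using Finite.induction_empty_option with
    | of_equiv e h =>
        exact of_mulEquiv (MulEquiv.arrowCongr e (MulEquiv.refl G)) h
    | h_empty =>
        have : Subsingleton (PEmpty → G) := ⟨fun f g => funext fun x => x.elim⟩
        exact subsingleton_usc
    | h_option ih =>
        rename_i β _inst
        have e : (G × (β → G)) ≃* (Option β → G) :=
          { toEquiv := (Equiv.piOptionEquivProd (β := fun _ : Option β => G)).symm
            map_mul' := by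
              intro x y
              funext o
              cases o <;> rfl }
        exact of_mulEquiv e (prod_usc hG ih)
  exact key ι
end USCAux

namespace USCAux

variable {N₁ N₂ : Type*} (G₁ : Subgroup (Equiv.Perm N₁))

/-- The base permutation `(n₁, n₂) ↦ (f(n₂)(n₁), n₂)`. -/
def basePerm (f : N₂ → G₁) : Equiv.Perm (N₁ × N₂) where
  toFun p := ((f p.2 : Equiv.Perm N₁) p.1, p.2)
  invFun p := ((f p.2 : Equiv.Perm N₁).symm p.1, p.2)
  left_inv p := by simp
  right_inv p := by simp

@[simp] lemma basePerm_apply (f : N₂ → G₁) (p : N₁ × N₂) :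
    basePerm G₁ f p = ((f p.2 : Equiv.Perm N₁) p.1, p.2) := rfl

/-- The base group embedding as a monoid hom into `W`. -/
def baseHom (W : Subgroup (Equiv.Perm (N₁ × N₂)))
    (hbase : ∀ f, basePerm G₁ f ∈ W) : (N₂ → G₁) →* W where
  toFun f := ⟨basePerm G₁ f, hbase f⟩
  map_one' := Subtype.ext (Equiv.ext fun p => by simp)
  map_mul' f g := Subtype.ext (Equiv.ext fun p => by
    simp [Subgroup.coe_mul, Equiv.Perm.mul_apply, Pi.mul_apply])

end USCAux


/-- if `G₁ ≤ Sym(N₁)` has uncountable strong cofinality,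
`G₂ ≤ Sym(N₂)` with `N₂` finite, then the permutational wreath product
`G = G₁ Wr G₂` acting on `N₁ × N₂` (the group of permutations
`(n₁, n₂) ↦ (f(n₂)(n₁), σ(n₂))` with `f : N₂ → G₁`, `σ ∈ G₂`) has uncountable
strong cofinality. -/
theorem wreath_product_uncountable_strong_cofinality
    (N₁ N₂ : Type*) [Finite N₂]
    (G₁ : Subgroup (Equiv.Perm N₁)) (G₂ : Subgroup (Equiv.Perm N₂))
    (h₁ : HasUncountableStrongCofinality G₁)
    (W : Subgroup (Equiv.Perm (N₁ × N₂)))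
    (hW : ∀ g : Equiv.Perm (N₁ × N₂), g ∈ W ↔
      ∃ (f : N₂ → G₁) (σ : G₂), ∀ p : N₁ × N₂,
        g p = ((f p.2 : Equiv.Perm N₁) p.1, (σ : Equiv.Perm N₂) p.2)) :
    HasUncountableStrongCofinality W := by
  classical
  have hbase : ∀ f, USCAux.basePerm G₁ f ∈ W := fun f =>
    (hW _).2 ⟨f, 1, fun p => by simp⟩
  set φ : (N₂ → G₁) →* W := USCAux.baseHom G₁ W hbase with hφ
  have hlift : ∀ σ : G₂, Equiv.prodCongr (Equiv.refl N₁) (σ : Equiv.Perm N₂) ∈ W := fun σ =>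
    (hW _).2 ⟨1, σ, fun p => by simp [Prod.map]⟩
  set s : G₂ → W := fun σ => ⟨_, hlift σ⟩ with hs
  -- decomposition
  have hdec : ∀ w : W, ∃ (σ : G₂) (f : N₂ → G₁), w = s σ * φ f := by
    intro w
    obtain ⟨f, σ, hw⟩ := (hW w).1 w.2
    refine ⟨σ, f, Subtype.ext (Equiv.ext fun p => ?_)⟩
    rw [hw p]
    simp [hs, hφ, USCAux.baseHom, Subgroup.coe_mul]
  intro A hmono hcov
  have hcovm : ∀ w : W, ∃ m, w ∈ A m := fun w => Set.mem_iUnion.1 (hcov ▸ Set.mem_univ w)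
  obtain ⟨m₀, hm₀⟩ := hcovm 1
  set B : ℕ → Set W := fun m => A (m + m₀) with hB
  have hBmono : Monotone B := fun a b hab => hmono (by omega)
  have hAB : ∀ m, A m ⊆ B m := fun m => hmono (Nat.le_add_right _ _)
  have hBone : ∀ m, (1 : W) ∈ B m := fun m => hmono (Nat.le_add_left _ _) hm₀
  -- all lifts in one stage
  have : Fintype G₂ := Fintype.ofFinite _
  choose ms hms using fun σ : G₂ => hcovm (s σ)
  set m₁ : ℕ := Finset.univ.sup ms with hm₁
  have hsm : ∀ σ : G₂, s σ ∈ B m₁ := fun σ =>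
    hAB m₁ (hmono (Finset.le_sup (Finset.mem_univ σ)) (hms σ))
  -- the base group exhaustion
  have hP : HasUncountableStrongCofinality (N₂ → G₁) := USCAux.pi_usc h₁
  obtain ⟨mP, k, hmk⟩ := hP (fun m => {f | φ f ∈ B m})
    (fun a b hab f hf => hBmono hab hf)
    (Set.eq_univ_of_forall fun f => by
      obtain ⟨m, hm⟩ := hcovm (φ f)
      exact Set.mem_iUnion.2 ⟨m, hAB m hm⟩)
  set M := max m₁ mP
  refine ⟨M + m₀, 1 + k, Set.eq_univ_of_forall fun w => ?_⟩
  obtain ⟨σ, f, rfl⟩ := hdec w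
  have h1 : s σ ∈ B M := hBmono (le_max_left _ _) (hsm σ)
  have h2 : φ f ∈ B M ^ k := by
    have : f ∈ {f | φ f ∈ B mP} ^ k := hmk ▸ Set.mem_univ _
    exact USCAux.mem_pow_map φ (S := {f | φ f ∈ B mP}) (T := B M)
      (fun a ha => hBmono (le_max_right _ _) ha) k _ this
  have : s σ * φ f ∈ B M ^ (1 + k) := by
    rw [pow_add, pow_one]
    exact Set.mul_mem_mul h1 h2
  exact this
end

section
/- Let G be a group, N a normal subgroup of G with G/N finite. If N has uncountable strong cofinality, then G has uncountable strong cofinality. -/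
open Pointwise

/-- an extension of a finite group by a group with uncountable
strong cofinality has uncountable strong cofinality. -/
theorem uncountable_strong_cofinality_of_finite_quotient
    (G : Type*) [Group G] (N : Subgroup G) [N.Normal] [Finite (G ⧸ N)]
    (hN : HasUncountableStrongCofinality N) :
    HasUncountableStrongCofinality G := by
  intro A hmono hU
  -- restrict the exhaustion to N
  set B : ℕ → Set N := fun m => (Subtype.val) ⁻¹' (A m) with hB
  have hBmono : Monotone B := fun i j hij => Set.preimage_mono (hmono hij)
  have hBU : (⋃ m, B m) = Set.univ := by
    ext n
    simp only [Set.mem_iUnion, Set.mem_univ, iff_true, hB, Set.mem_preimage]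
    have : (n : G) ∈ ⋃ m, A m := hU ▸ Set.mem_univ _
    exact Set.mem_iUnion.1 this
  obtain ⟨m, k, hmk⟩ := hN B hBmono hBU
  -- a uniform stage containing all coset representatives
  have := Fintype.ofFinite (G ⧸ N)
  have hrep : ∀ q : G ⧸ N, ∃ j, Quotient.out q ∈ A j := by
    intro q
    have : Quotient.out q ∈ ⋃ j, A j := hU ▸ Set.mem_univ _
    exact Set.mem_iUnion.1 this
  choose f hf using hrep
  set m₀ : ℕ := Finset.univ.sup f with hm₀
  set M : ℕ := max m₀ m with hM
  refine ⟨M, k + 1, Set.eq_univ_of_forall fun g => ?_⟩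
  -- key: coercion of powers
  have key : ∀ (j : ℕ) (x : N), x ∈ B M ^ j → (x : G) ∈ A M ^ j := by
    intro j
    induction j with
    | zero =>
      intro x hx
      simp only [pow_zero, Set.mem_one] at hx ⊢
      rw [hx]; rfl
    | succ j ih =>
      intro x hx
      rw [pow_succ] at hx ⊢
      obtain ⟨y, hy, z, hz, rfl⟩ := hx
      exact Set.mul_mem_mul (ih y hy) hz
  -- decompose g
  set q : G ⧸ N := QuotientGroup.mk g with hq
  set t : G := Quotient.out q with ht
  have htq : QuotientGroup.mk t = q := Quotient.out_eq' q
  have hn : t⁻¹ * g ∈ N := by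
    rw [← QuotientGroup.eq]
    rw [htq, hq]
  set n : N := ⟨t⁻¹ * g, hn⟩ with hnn
  have hnB : n ∈ B M ^ k := by
    have : n ∈ B m ^ k := hmk ▸ Set.mem_univ n
    exact Set.pow_subset_pow_left (hBmono (le_max_right m₀ m)) this
  have hnA : (n : G) ∈ A M ^ k := key k n hnB
  have htA : t ∈ A M :=
    hmono (le_trans (Finset.le_sup (Finset.mem_univ q)) (le_max_left m₀ m)) (hf q)
  have : t * (n : G) ∈ A M ^ (k + 1) := by
    rw [pow_succ']
    exact Set.mul_mem_mul htA hnA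
  have hg : t * (n : G) = g := by
    simp [hnn]
  rwa [hg] at this
end

section
/- The infinite symmetric group S∞ = Sym(ℕ) has uncountable strong cofinality: whenever Sym(ℕ) = ⋃ₘ Aₘ for an increasing chain of subsets A₀ ⊆ A₁ ⊆ ..., there exist m and k such that every permutation of ℕ is a product of k elements of Aₘ. -/
open Pointwise

theorem Equiv.Perm.apply_inv_self {α : Type*} (f : Equiv.Perm α) (x : α) : f (f⁻¹ x) = x :=
  f.apply_symm_apply x

theorem Equiv.Perm.inv_apply_self {α : Type*} (f : Equiv.Perm α) (x : α) : f⁻¹ (f x) = x :=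
  f.symm_apply_apply x

namespace BergmanAux

open Function

noncomputable section
open Classical Equiv

abbrev Pm := Equiv.Perm ℕ

/-- master coding of ℕ as a triple -/
def N : (ℕ × ℤ × ℕ) ≃ ℕ := Denumerable.eqv (ℕ × ℤ × ℕ)

/-- row coding -/
def R : (ℤ × ℕ) ≃ ℕ := Denumerable.eqv (ℤ × ℕ)

/-- pairing -/
def π : (ℤ × ℕ) ≃ ℕ := Denumerable.eqv (ℤ × ℕ)


/-- Any infinite subset of a countable type is equiv to ℕ. -/
lemma set_equiv_nat {α : Type} [Countable α] (s : Set α) (hs : s.Infinite) :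
    Nonempty (s ≃ ℕ) := by
  have : Infinite s := hs.to_subtype
  have : Countable s := inferInstance
  have := Encodable.ofCountable s
  have := Denumerable.ofEncodableOfInfinite s
  exact ⟨Denumerable.eqv s⟩

lemma set_equiv_set {α β : Type} [Countable α] [Countable β] (s : Set α) (t : Set β)
    (hs : s.Infinite) (ht : t.Infinite) : Nonempty (s ≃ t) := by
  obtain ⟨e⟩ := set_equiv_nat s hs
  obtain ⟨f⟩ := set_equiv_nat t ht
  exact ⟨e.trans f.symm⟩

/-- Partition into infinite fibers gives a structured equiv. -/
lemma part_equiv {ι α : Type} [Countable α] (f : α → ι)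
    (h : ∀ i, {x : α | f x = i}.Infinite) :
    ∃ e : ι × ℕ ≃ α, ∀ i n, f (e (i, n)) = i := by
  have hfib : ∀ i, Nonempty ({x : α // f x = i} ≃ ℕ) := fun i => set_equiv_nat {x : α | f x = i} (h i)
  have g : ∀ i, ({x : α // f x = i} ≃ ℕ) := fun i => Classical.choice (hfib i)
  refine ⟨((Equiv.sigmaEquivProd ι ℕ).symm).trans
    ((Equiv.sigmaCongrRight (fun i => (g i).symm)).trans (Equiv.sigmaFiberEquiv f)), ?_⟩
  intro i n
  simp [Equiv.sigmaEquivProd, Equiv.sigmaCongrRight, Equiv.sigmaFiberEquiv]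
  exact ((g i).symm n).2

/-- product of a list of elements of S is in S ^ length. -/
lemma list_prod_mem_pow {G : Type} [Monoid G] (S : Set G) :
    ∀ L : List G, (∀ x ∈ L, x ∈ S) → L.prod ∈ S ^ L.length := by
  intro L
  induction L with
  | nil => intro _; simp [Set.mem_one]
  | cons a t ih =>
    intro h
    rw [List.prod_cons, List.length_cons, pow_succ']
    exact Set.mul_mem_mul (h a (by simp)) (ih (fun x hx => h x (by simp [hx])))

lemma exists_bound {G : Type} (B : ℕ → Set G) (hmono : Monotone B)
    (hcov : ∀ g, ∃ m, g ∈ B m) :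
    ∀ L : List G, ∃ m, ∀ x ∈ L, x ∈ B m := by
  intro L
  induction L with
  | nil => exact ⟨0, by simp⟩
  | cons a t ih =>
    obtain ⟨m1, hm1⟩ := ih
    obtain ⟨m2, hm2⟩ := hcov a
    refine ⟨max m1 m2, ?_⟩
    intro x hx
    rcases List.mem_cons.mp hx with h | h
    · exact hmono (le_max_right m1 m2) (h ▸ hm2)
    · exact hmono (le_max_left m1 m2) (hm1 x h)

lemma pow_subset_pow {G : Type} [Monoid G] {S T : Set G} (h : S ⊆ T) (n : ℕ) :
    S ^ n ⊆ T ^ n := by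
  induction n with
  | zero => simp
  | succ k ih => rw [pow_succ, pow_succ]; exact Set.mul_subset_mul ih h


/-- the "big permutation" acting blockwise prescribed by F on each row -/
def bigPerm (F : ℕ → ℤ → Pm) : Pm :=
  (N.symm.trans (Equiv.prodCongrRight (fun i => Equiv.prodCongrRight (fun j => F i j)))).trans N

lemma bigPerm_apply (F : ℕ → ℤ → Pm) (i : ℕ) (j : ℤ) (n : ℕ) :
    bigPerm F (N (i, j, n)) = N (i, j, F i j n) := by
  simp [bigPerm, Equiv.prodCongrRight]

/-- Diagonal argument: some B m realizes every block-sequence on some row. -/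
lemma diagonal (B : ℕ → Set Pm) (hcov : ∀ g : Pm, ∃ m, g ∈ B m) :
    ∃ m i₀, ∀ f : ℤ → Pm, ∃ u ∈ B m, ∀ j n, u (N (i₀, j, n)) = N (i₀, j, f j n) := by
  by_contra h
  push_neg at h
  choose F hF using h
  set G : Pm := bigPerm (fun i => F i i) with hG
  obtain ⟨M, hM⟩ := hcov G
  obtain ⟨j, n, hjn⟩ := hF M M G hM
  exact hjn (bigPerm_apply (fun i => F i i) M j n)


def zshift (i₀ : ℕ) : Equiv.Perm (ℕ × ℤ × ℕ) where
  toFun := fun p => if p.1 = i₀ then (p.1, p.2.1 + 1, p.2.2) else p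
  invFun := fun p => if p.1 = i₀ then (p.1, p.2.1 - 1, p.2.2) else p
  left_inv := by rintro ⟨i, j, n⟩; by_cases h : i = i₀ <;> simp [h]
  right_inv := by rintro ⟨i, j, n⟩; by_cases h : i = i₀ <;> simp [h]
def t₀ (i₀ : ℕ) : Pm := N.permCongr (zshift i₀)
lemma t₀_apply (i₀ i : ℕ) (j : ℤ) (n : ℕ) :
    t₀ i₀ (N (i, j, n)) = N (i, if i = i₀ then j + 1 else j, n) := by
  by_cases h : i = i₀ <;> simp [t₀, Equiv.permCongr_apply, zshift, h]
lemma t₀_inv_apply (i₀ i : ℕ) (j : ℤ) (n : ℕ) :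
    (t₀ i₀)⁻¹ (N (i, j, n)) = N (i, if i = i₀ then j - 1 else j, n) := by
  rw [Equiv.Perm.inv_def, Equiv.symm_apply_eq, t₀_apply]
  by_cases h : i = i₀ <;> simp [h]
def telPos (f : ℤ → Pm) : ℕ → Pm
  | 0 => f 0
  | (n+1) => f (n+1) * telPos f n
def telNeg (f : ℤ → Pm) : ℕ → Pm
  | 0 => 1
  | (m+1) => (f (-1 - m))⁻¹ * telNeg f m
def tel (f : ℤ → Pm) (j : ℤ) : Pm := if 0 ≤ j then telPos f j.toNat else telNeg f (-1 - j).toNat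
lemma tel_rec (f : ℤ → Pm) (j : ℤ) : tel f j = f j * tel f (j - 1) := by
  rcases lt_trichotomy j 0 with hj | hj | hj
  · have h1 : ¬ (0 ≤ j) := by omega
    have h2 : ¬ (0 ≤ j - 1) := by omega
    rw [tel, tel, if_neg h1, if_neg h2]
    have h3 : (-1 - (j - 1)).toNat = (-1 - j).toNat + 1 := by omega
    rw [h3, telNeg]
    have h4 : (-1 - ((-1 - j).toNat : ℤ)) = j := by omega
    rw [h4]; group
  · subst hj
    have : tel f (0 - 1) = 1 := by rw [tel, if_neg (by omega)]; norm_num [telNeg]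
    rw [this, tel, if_pos le_rfl]; simp [telPos]
  · have h1 : (0 : ℤ) ≤ j := le_of_lt hj
    have h2 : (0 : ℤ) ≤ j - 1 := by omega
    rw [tel, tel, if_pos h1, if_pos h2]
    have h3 : j.toNat = (j - 1).toNat + 1 := by omega
    rw [h3, telPos]
    congr 2
    omega

-- === new material ===
/-- The telescope lemma: from a realization family we produce, for each block sequence f,
a 4-letter word acting exactly blockwise as f on row i₀ and identically elsewhere. -/
lemma telescope_main (S : Set Pm) (i₀ : ℕ)
    (hH : ∀ f : ℤ → Pm, ∃ u ∈ S, ∀ j n, u (N (i₀, j, n)) = N (i₀, j, f j n)) :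
    ∀ f : ℤ → Pm, ∃ u ∈ S, ∀ i j n,
      (u * t₀ i₀ * u⁻¹ * (t₀ i₀)⁻¹) (N (i, j, n)) = N (i, j, if i = i₀ then f j n else n) := by
  intro f
  obtain ⟨u, huS, hreal⟩ := hH (tel f)
  have hinv : ∀ j n, u⁻¹ (N (i₀, j, n)) = N (i₀, j, (tel f j)⁻¹ n) := by
    intro j n
    have : u (N (i₀, j, (tel f j)⁻¹ n)) = N (i₀, j, n) := by
      rw [hreal, Equiv.Perm.apply_inv_self]
    rw [← this, Equiv.Perm.inv_apply_self]
  have hoff : ∀ y : ℕ, (N.symm y).1 ≠ i₀ → (N.symm (u⁻¹ y)).1 ≠ i₀ := by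
    intro y hy hcon
    set q := N.symm (u⁻¹ y) with hq
    have h1 : u⁻¹ y = N (q.1, q.2.1, q.2.2) := by rw [hq]; exact (N.apply_symm_apply _).symm
    have h2 : y = u (N (q.1, q.2.1, q.2.2)) := by rw [← h1, Equiv.Perm.apply_inv_self]
    rw [hcon] at h2
    rw [hreal] at h2
    apply hy
    rw [h2]
    simp [N]
  refine ⟨u, huS, ?_⟩
  intro i j n
  by_cases h : i = i₀
  · subst h
    rw [Equiv.Perm.mul_apply, Equiv.Perm.mul_apply, Equiv.Perm.mul_apply]
    rw [t₀_inv_apply, if_pos rfl, hinv, t₀_apply, if_pos rfl]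
    have hj : j - 1 + 1 = j := by omega
    rw [hj, hreal, if_pos rfl]
    congr 2
    rw [tel_rec f j, Equiv.Perm.mul_apply, Equiv.Perm.apply_inv_self]
  · rw [Equiv.Perm.mul_apply, Equiv.Perm.mul_apply, Equiv.Perm.mul_apply]
    rw [t₀_inv_apply, if_neg h]
    have hy : (N.symm (N (i, j, n))).1 ≠ i₀ := by simpa [N] using h
    have hoffy := hoff _ hy
    set y := u⁻¹ (N (i, j, n)) with hydef
    have h1 : y = N ((N.symm y).1, (N.symm y).2.1, (N.symm y).2.2) := (N.apply_symm_apply _).symm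
    rw [h1, t₀_apply, if_neg hoffy, ← h1, hydef, Equiv.Perm.apply_inv_self, if_neg h]

/-- The half-conjugation lemma. -/
lemma half_conj (i₀ : ℕ) (B : (ℤ × ℕ) ≃ ℕ) (P : ℤ → Prop) (β : ℤ → ℤ)
    (hinj : Function.Injective β) (hP : ∀ z, P (β z)) (hsurj : ∀ w, P w → ∃ z, β z = w)
    (hex : ∃ z, ¬ P z) :
    ∃ c : Pm, ∀ x : Pm, (∀ j n, ∃ n', x (B (j, n)) = B (j, n')) →
      ∃ f : ℤ → Pm, ∀ w : Pm,
        (∀ i j n, w (N (i, j, n)) = N (i, j, if i = i₀ then f j n else n)) →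
        ∀ y, (c * w * c⁻¹) y = if P ((B.symm y).1) then x y else y := by
  -- the sets
  set Sig : Set ℕ := {y | (N.symm y).1 = i₀} with hSig
  set U : Set ℕ := {y | P ((B.symm y).1)} with hU
  -- structured equivs
  have eSig : { e : (ℤ × ℕ) ≃ Sig // ∀ j n, (e (j, n) : ℕ) = N (i₀, j, n) } := by
    have hbij : Function.Bijective (fun p : ℤ × ℕ => (⟨N (i₀, p.1, p.2), by simp [hSig, N]⟩ : Sig)) := by
      constructor
      · intro p q h
        have := congrArg (fun z : Sig => N.symm (z : ℕ)) h
        simp only [Equiv.symm_apply_apply] at this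
        obtain ⟨p1, p2⟩ := p; obtain ⟨q1, q2⟩ := q
        simpa using this
      · rintro ⟨y, hy⟩
        refine ⟨((N.symm y).2.1, (N.symm y).2.2), ?_⟩
        apply Subtype.ext
        simp only
        rw [show (i₀, (N.symm y).2.1, (N.symm y).2.2) = N.symm y by
          rw [← hy]]
        exact N.apply_symm_apply y
    exact ⟨Equiv.ofBijective _ hbij, fun j n => by simp [Equiv.ofBijective]⟩
  have eU : { e : (ℤ × ℕ) ≃ U // ∀ j n, (e (j, n) : ℕ) = B (β j, n) } := by
    have hbij : Function.Bijective (fun p : ℤ × ℕ => (⟨B (β p.1, p.2), by simp [hU, hP]⟩ : U)) := by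
      constructor
      · intro p q h
        have := congrArg (fun z : U => B.symm (z : ℕ)) h
        simp only [Equiv.symm_apply_apply] at this
        obtain ⟨p1, p2⟩ := p; obtain ⟨q1, q2⟩ := q
        simp only [Prod.mk.injEq] at this
        exact Prod.ext (hinj this.1) this.2
      · rintro ⟨y, hy⟩
        obtain ⟨z, hz⟩ := hsurj _ hy
        refine ⟨(z, (B.symm y).2), ?_⟩
        apply Subtype.ext
        simp only [hz]
        rw [show ((B.symm y).1, (B.symm y).2) = B.symm y from rfl]
        exact B.apply_symm_apply y
    exact ⟨Equiv.ofBijective _ hbij, fun j n => by simp [Equiv.ofBijective]⟩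
  -- complements are infinite
  have hSigC : (Sigᶜ).Infinite := by
    refine Set.infinite_of_injective_forall_mem (f := fun n : ℕ => N (i₀ + 1, 0, n)) ?_ ?_
    · intro a b h; simpa [N] using h
    · intro n; simp [hSig, N]
  have hUC : (Uᶜ).Infinite := by
    obtain ⟨z₀, hz₀⟩ := hex
    refine Set.infinite_of_injective_forall_mem (f := fun n : ℕ => B (z₀, n)) ?_ ?_
    · intro a b h; simpa using h
    · intro n; simp [hU, hz₀]
  obtain ⟨e2⟩ := set_equiv_set (Sigᶜ) (Uᶜ) hSigC hUC
  set e1 : (Sig : Set ℕ) ≃ (U : Set ℕ) := (eSig.1.symm.trans eU.1) with he1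
  set c : Pm := (Equiv.Set.sumCompl Sig).symm.trans ((e1.sumCongr e2).trans (Equiv.Set.sumCompl U)) with hc
  have c1 : ∀ j n, c (N (i₀, j, n)) = B (β j, n) := by
    intro j n
    have hmem : N (i₀, j, n) ∈ Sig := by simp [hSig, N]
    rw [hc]
    simp only [Equiv.trans_apply]
    rw [Equiv.Set.sumCompl_symm_apply_of_mem hmem]
    simp only [Equiv.sumCongr_apply, Sum.map_inl, Equiv.Set.sumCompl_apply_inl]
    rw [he1]
    simp only [Equiv.trans_apply]
    have : eSig.1.symm ⟨N (i₀, j, n), hmem⟩ = (j, n) := by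
      rw [Equiv.symm_apply_eq]
      apply Subtype.ext
      exact (eSig.2 j n).symm
    rw [this]
    exact eU.2 j n
  have c2 : ∀ y : ℕ, ¬ P ((B.symm y).1) → (N.symm (c⁻¹ y)).1 ≠ i₀ := by
    intro y hy hcon
    have h1 : c⁻¹ y = N (i₀, (N.symm (c⁻¹ y)).2.1, (N.symm (c⁻¹ y)).2.2) := by
      rw [show ((i₀, (N.symm (c⁻¹ y)).2.1, (N.symm (c⁻¹ y)).2.2) : ℕ × ℤ × ℕ) = N.symm (c⁻¹ y) by
        rw [← hcon]]
      exact (N.apply_symm_apply _).symm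
    have h2 : y = B (β (N.symm (c⁻¹ y)).2.1, (N.symm (c⁻¹ y)).2.2) := by
      rw [← c1]
      rw [← h1]
      exact (Equiv.Perm.apply_inv_self c y).symm
    apply hy
    rw [h2]
    simp [hP]
  -- main part
  refine ⟨c, ?_⟩
  intro x hx
  have hxinv : ∀ j n, ∃ n', x⁻¹ (B (j, n)) = B (j, n') := by
    intro j n
    set z := x⁻¹ (B (j, n)) with hz
    have h1 : z = B ((B.symm z).1, (B.symm z).2) := (B.apply_symm_apply z).symm
    obtain ⟨n₁, hn₁⟩ := hx (B.symm z).1 (B.symm z).2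
    have h2 : B (j, n) = B ((B.symm z).1, n₁) := by
      rw [← hn₁, ← h1, hz, Equiv.Perm.apply_inv_self]
    have h3 : j = (B.symm z).1 := by
      have := B.injective h2
      exact (Prod.mk.injEq _ _ _ _ ▸ this).1
    refine ⟨(B.symm z).2, ?_⟩
    calc x⁻¹ (B (j, n)) = z := hz.symm
      _ = B ((B.symm z).1, (B.symm z).2) := h1
      _ = B (j, (B.symm z).2) := by rw [← h3]
  -- the block permutations
  have fdef : ∀ j : ℤ, { fj : Pm // ∀ n, x (B (β j, n)) = B (β j, fj n) } := by
    intro j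
    refine ⟨⟨fun n => (B.symm (x (B (β j, n)))).2, fun n => (B.symm (x⁻¹ (B (β j, n)))).2, ?_, ?_⟩, ?_⟩
    · intro n
      obtain ⟨n', hn'⟩ := hx (β j) n
      simp only [hn', Equiv.symm_apply_apply]
      have : x⁻¹ (B (β j, n')) = B (β j, n) := by rw [← hn', Equiv.Perm.inv_apply_self]
      simp [this]
    · intro n
      obtain ⟨n', hn'⟩ := hxinv (β j) n
      simp only [hn', Equiv.symm_apply_apply]
      have : x (B (β j, n')) = B (β j, n) := by rw [← hn', Equiv.Perm.apply_inv_self]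
      simp [this]
    · intro n
      obtain ⟨n', hn'⟩ := hx (β j) n
      simp only [Equiv.coe_fn_mk, hn', Equiv.symm_apply_apply]
  refine ⟨fun j => (fdef j).1, ?_⟩
  intro w hw y
  by_cases hy : P ((B.symm y).1)
  · rw [if_pos hy]
    obtain ⟨z, hz⟩ := hsurj _ hy
    have hy2 : y = B (β z, (B.symm y).2) := by
      rw [hz]
      exact (B.apply_symm_apply y).symm
    have hcinv : c⁻¹ y = N (i₀, z, (B.symm y).2) := by
      have hcy : c (N (i₀, z, (B.symm y).2)) = y := by rw [c1, ← hy2]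
      rw [Equiv.Perm.inv_def, Equiv.symm_apply_eq]
      exact hcy.symm
    rw [Equiv.Perm.mul_apply, Equiv.Perm.mul_apply, hcinv, hw, if_pos rfl, c1]
    rw [hy2, (fdef z).2]
    simp
  · rw [if_neg hy]
    have hoff := c2 y hy
    set z := c⁻¹ y with hzdef
    have h1 : z = N ((N.symm z).1, (N.symm z).2.1, (N.symm z).2.2) := (N.apply_symm_apply z).symm
    rw [Equiv.Perm.mul_apply, Equiv.Perm.mul_apply, ← hzdef, h1, hw, if_neg hoff, ← h1, hzdef,
      Equiv.Perm.apply_inv_self]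

/-- full conjugation factorization of a block-preserving permutation into two
conjugated "row i₀" telescoped words. -/
lemma conj_factor (i₀ : ℕ) (B : (ℤ × ℕ) ≃ ℕ) :
    ∃ c c' : Pm, ∀ x : Pm, (∀ j n, ∃ n', x (B (j, n)) = B (j, n')) →
      ∃ f f' : ℤ → Pm, ∀ w w' : Pm,
        (∀ i j n, w (N (i, j, n)) = N (i, j, if i = i₀ then f j n else n)) →
        (∀ i j n, w' (N (i, j, n)) = N (i, j, if i = i₀ then f' j n else n)) →
        x = c * w * c⁻¹ * (c' * w' * c'⁻¹) := by
  obtain ⟨c, hcMain⟩ := half_conj i₀ B (fun z => Even z) (fun z => 2 * z)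
    (fun a b h => by dsimp only at h; omega) (fun z => even_two_mul z)
    (fun w hw => by obtain ⟨r, hr⟩ := hw; exact ⟨r, by omega⟩) ⟨1, by decide⟩
  obtain ⟨c', hc'Main⟩ := half_conj i₀ B (fun z => ¬ Even z) (fun z => 2 * z + 1)
    (fun a b h => by dsimp only at h; omega) (fun z => by simp [Int.even_add_one, parity_simps])
    (fun w hw => by
      obtain ⟨r, hr⟩ := Int.not_even_iff_odd.mp hw
      exact ⟨r, by omega⟩) ⟨0, by simp⟩
  refine ⟨c, c', ?_⟩
  intro x hx
  obtain ⟨f, hf⟩ := hcMain x hx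
  obtain ⟨f', hf'⟩ := hc'Main x hx
  refine ⟨f, f', ?_⟩
  intro w w' hw hw'
  have ha := hf w hw
  have hb := hf' w' hw'
  apply Equiv.ext
  intro y
  have key : (c * w * c⁻¹ * (c' * w' * c'⁻¹)) y = (c * w * c⁻¹) ((c' * w' * c'⁻¹) y) :=
    Equiv.Perm.mul_apply _ _ _
  rw [key, hb y]
  by_cases hEv : Even ((B.symm y).1)
  · rw [if_neg (by simpa using hEv), ha y, if_pos hEv]
  · rw [if_pos hEv, ha (x y)]
    have hidx : (B.symm (x y)).1 = (B.symm y).1 := by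
      obtain ⟨n', hn'⟩ := hx (B.symm y).1 (B.symm y).2
      have hy' : y = B ((B.symm y).1, (B.symm y).2) := (B.apply_symm_apply y).symm
      rw [hy', hn']
      simp
    rw [hidx, if_neg hEv]

def RowP (σ : Pm) : Prop := ∀ x, (R.symm (σ x)).1 = (R.symm x).1
def ColP (σ : Pm) : Prop := ∀ x, (R.symm (σ x)).2 = (R.symm x).2

/-- L1: a permutation with all transition fibers infinite factors as row * col * row. -/
lemma L1 (g : Pm)
    (hg : ∀ p : ℤ × ℤ, {x : ℕ | ((R.symm x).1, (R.symm (g x)).1) = p}.Infinite) :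
    ∃ ρ₁ κ ρ₂ : Pm, g = ρ₁ * κ * ρ₂ ∧ RowP ρ₁ ∧ ColP κ ∧ RowP ρ₂ := by
  set φ : ℕ → ℤ × ℤ := fun x => ((R.symm x).1, (R.symm (g x)).1) with hφdef
  obtain ⟨Z, hZ⟩ := part_equiv φ hg
  have hφ : ∀ x, φ x = (Z.symm x).1 := by
    intro x
    conv_lhs => rw [← Z.apply_symm_apply x]
    exact hZ _ _
  set map₁ : ((ℤ × ℤ) × ℕ) ≃ (ℤ × ℕ) :=
    ⟨fun q => (q.1.1, π (q.1.2 - q.1.1, q.2)),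
     fun r => ((r.1, r.1 + (π.symm r.2).1), (π.symm r.2).2),
     by rintro ⟨⟨i, j⟩, k⟩; simp [Prod.ext_iff],
     by rintro ⟨i, v⟩; simp⟩ with hmap₁
  set κmap : (ℤ × ℕ) ≃ (ℤ × ℕ) :=
    ⟨fun r => (r.1 + (π.symm r.2).1, r.2),
     fun r => (r.1 - (π.symm r.2).1, r.2),
     by rintro ⟨i, v⟩; simp [Prod.ext_iff],
     by rintro ⟨i, v⟩; simp [Prod.ext_iff]⟩ with hκmap
  set ρ₂ : Pm := Z.symm.trans (map₁.trans R) with hρ₂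
  set κ : Pm := R.symm.trans (κmap.trans R) with hκ
  set ρ₁ : Pm := (κ.symm.trans ρ₂.symm).trans g with hρ₁
  refine ⟨ρ₁, κ, ρ₂, ?_, ?_, ?_, ?_⟩
  · apply Equiv.ext
    intro x
    have : (ρ₁ * κ * ρ₂) x = ρ₁ (κ (ρ₂ x)) := rfl
    rw [this, hρ₁]
    simp [Equiv.trans_apply]
  · -- RowP ρ₁
    intro y
    have step1 : κ.symm y = R (κmap.symm (R.symm y)) := by rw [hκ]; rfl
    have step2 : ρ₂.symm (κ.symm y) = Z (map₁.symm (κmap.symm (R.symm y))) := by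
      rw [step1, hρ₂]
      simp [Equiv.trans_apply]
    have hval : ρ₁ y = g (Z (map₁.symm (κmap.symm (R.symm y)))) := by
      rw [hρ₁]
      simp only [Equiv.trans_apply]
      rw [step2]
    rw [hval]
    have h1 : (R.symm (g (Z (map₁.symm (κmap.symm (R.symm y)))))).1
        = (map₁.symm (κmap.symm (R.symm y))).1.2 := by
      have := hZ (map₁.symm (κmap.symm (R.symm y))).1 (map₁.symm (κmap.symm (R.symm y))).2
      rw [show ((map₁.symm (κmap.symm (R.symm y))).1, (map₁.symm (κmap.symm (R.symm y))).2)
          = map₁.symm (κmap.symm (R.symm y)) from rfl] at this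
      rw [hφdef] at this
      exact congrArg Prod.snd this
    rw [h1, hmap₁, hκmap]
    simp
  · -- ColP κ
    intro x
    rw [hκ]
    simp [Equiv.trans_apply, hκmap]
  · -- RowP ρ₂
    intro x
    have h1 : ρ₂ x = R (map₁ (Z.symm x)) := by rw [hρ₂]; rfl
    rw [h1]
    have h2 : (R.symm (R (map₁ (Z.symm x)))).1 = (Z.symm x).1.1 := by
      rw [Equiv.symm_apply_apply, hmap₁]
      rfl
    rw [h2]
    have := hφ x
    rw [hφdef] at this
    exact (congrArg Prod.fst this).symm

-- ===== fresh-element machinery =====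
lemma exists_fresh (e : ℕ → ℕ) (he : Function.Injective e) (L : List ℕ) : ∃ m, e m ∉ L := by
  have hfin : {m | e m ∈ L}.Finite := Set.Finite.preimage he.injOn L.finite_toSet
  obtain ⟨m, hm⟩ := hfin.infinite_compl.nonempty
  exact ⟨m, hm⟩

def fresh (e : ℕ → ℕ) (he : Function.Injective e) (L : List ℕ) : ℕ :=
  e (Classical.choose (exists_fresh e he L))

lemma fresh_not_mem (e : ℕ → ℕ) (he : Function.Injective e) (L : List ℕ) :
    fresh e he L ∉ L := Classical.choose_spec (exists_fresh e he L)

lemma fresh_mem_range (e : ℕ → ℕ) (he : Function.Injective e) (L : List ℕ) :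
    ∃ m, fresh e he L = e m := ⟨_, rfl⟩

-- ===== enumerations =====
def σs (n : ℕ) : ℤ := Denumerable.ofNat ℤ n.unpair.1

lemma σs_spec (i : ℤ) (b : ℕ) : σs (Nat.pair (Encodable.encode i) b) = i := by
  simp only [σs, Nat.unpair_pair, Denumerable.ofNat_encode]

def yeEnum (g : Pm) (i : ℤ) : ℕ → ℕ := fun m => g (R (i, m))
def rEnum (i : ℤ) : ℕ → ℕ := fun m => R (i, m)

lemma yeEnum_inj (g : Pm) (i : ℤ) : Function.Injective (yeEnum g i) := by
  intro a b h
  simpa [yeEnum] using h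

lemma rEnum_inj (i : ℤ) : Function.Injective (rEnum i) := by
  intro a b h
  simpa [rEnum] using h

-- ===== the recursion =====
def used (g : Pm) : ℕ → List ℕ
  | 0 => []
  | (n+1) =>
      fresh (rEnum (σs n)) (rEnum_inj _)
        (fresh (yeEnum g (σs n)) (yeEnum_inj g _) (used g n) :: used g n) ::
      fresh (yeEnum g (σs n)) (yeEnum_inj g _) (used g n) :: used g n

def tseq (g : Pm) (n : ℕ) : ℕ := fresh (yeEnum g (σs n)) (yeEnum_inj g _) (used g n)
def rseq (g : Pm) (n : ℕ) : ℕ := fresh (rEnum (σs n)) (rEnum_inj _) (tseq g n :: used g n)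

lemma used_succ (g : Pm) (n : ℕ) : used g (n+1) = rseq g n :: tseq g n :: used g n := rfl

lemma used_mono (g : Pm) {m n : ℕ} (h : m ≤ n) : ∀ x ∈ used g m, x ∈ used g n := by
  induction h with
  | refl => exact fun x hx => hx
  | step _ ih =>
    rename_i k _
    intro x hx
    rw [used_succ]
    exact List.mem_cons_of_mem _ (List.mem_cons_of_mem _ (ih x hx))

lemma tseq_mem (g : Pm) (n : ℕ) : tseq g n ∈ used g (n+1) := by
  rw [used_succ]; simp

lemma rseq_mem (g : Pm) (n : ℕ) : rseq g n ∈ used g (n+1) := by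
  rw [used_succ]; simp

lemma tseq_not_mem (g : Pm) (n : ℕ) : tseq g n ∉ used g n := fresh_not_mem _ _ _

lemma rseq_not_mem (g : Pm) (n : ℕ) : rseq g n ∉ tseq g n :: used g n := fresh_not_mem _ _ _

lemma tseq_inj (g : Pm) : Function.Injective (tseq g) := by
  intro n m h
  by_contra hne
  rcases Nat.lt_or_ge n m with hlt | hge
  · exact tseq_not_mem g m (h ▸ used_mono g hlt (tseq g n) (tseq_mem g n))
  · have hlt : m < n := lt_of_le_of_ne hge fun q => hne q.symm
    exact tseq_not_mem g n (h ▸ used_mono g hlt (tseq g m) (tseq_mem g m))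

lemma rseq_inj (g : Pm) : Function.Injective (rseq g) := by
  intro n m h
  by_contra hne
  rcases Nat.lt_or_ge n m with hlt | hge
  · have : rseq g n ∈ used g m := used_mono g hlt (rseq g n) (rseq_mem g n)
    exact rseq_not_mem g m (h ▸ List.mem_cons_of_mem _ this)
  · have hlt : m < n := lt_of_le_of_ne hge fun q => hne q.symm
    have : rseq g m ∈ used g n := used_mono g hlt (rseq g m) (rseq_mem g m)
    exact rseq_not_mem g n (h ▸ List.mem_cons_of_mem _ this)

lemma rseq_ne_tseq (g : Pm) (n m : ℕ) : rseq g n ≠ tseq g m := by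
  intro h
  rcases Nat.lt_or_ge n m with hlt | hge
  · have : rseq g n ∈ used g m := used_mono g hlt (rseq g n) (rseq_mem g n)
    exact tseq_not_mem g m (h ▸ this)
  · have : tseq g m ∈ tseq g n :: used g n := by
      rcases Nat.eq_or_lt_of_le hge with heq | hlt
      · rw [heq]; exact List.mem_cons_self
      · exact List.mem_cons_of_mem _ (used_mono g hlt (tseq g m) (tseq_mem g m))
    exact rseq_not_mem g n (h ▸ this)

def T2 (g : Pm) : Set ℕ := {x | ∃ n, tseq g n = x}

lemma tseq_mem_T2 (g : Pm) (n : ℕ) : tseq g n ∈ T2 g := ⟨n, rfl⟩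

lemma rseq_not_mem_T2 (g : Pm) (n : ℕ) : rseq g n ∉ T2 g := by
  rintro ⟨m, hm⟩
  exact rseq_ne_tseq g n m hm.symm

lemma tseq_spec (g : Pm) (n : ℕ) : ∃ m, tseq g n = g (R (σs n, m)) := ⟨_, rfl⟩
lemma rseq_spec (g : Pm) (n : ℕ) : ∃ m, rseq g n = R (σs n, m) := ⟨_, rfl⟩

lemma tseq_yidx (g : Pm) (n : ℕ) : (R.symm (g⁻¹ (tseq g n))).1 = σs n := by
  obtain ⟨m, hm⟩ := tseq_spec g n
  rw [hm, Equiv.Perm.inv_apply_self, Equiv.symm_apply_apply]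

lemma rseq_ridx (g : Pm) (n : ℕ) : (R.symm (rseq g n)).1 = σs n := by
  obtain ⟨m, hm⟩ := rseq_spec g n
  rw [hm, Equiv.symm_apply_apply]

/-- the mixing involution -/
def mixE : (ℤ × ℕ) ≃ (ℤ × ℕ) where
  toFun := fun q => ((π.symm q.2).1, π (q.1, (π.symm q.2).2))
  invFun := fun q => ((π.symm q.2).1, π (q.1, (π.symm q.2).2))
  left_inv := by rintro ⟨i, m⟩; simp
  right_inv := by rintro ⟨i, m⟩; simp

lemma mixE_spec (i j : ℤ) (b : ℕ) : mixE (i, π (j, b)) = (j, π (i, b)) := by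
  simp [mixE]

/-- the odd-slot set -/
def Omix : Set ℕ := {x | ¬ Even (R.symm x).2}

lemma L2 (g : Pm) :
    ∃ p : Pm,
      (∀ pr : ℤ × ℤ, {x : ℕ | ((R.symm x).1, (R.symm (p x)).1) = pr}.Infinite) ∧
      (∀ pr : ℤ × ℤ, {x : ℕ | ((R.symm x).1, (R.symm ((p⁻¹ * g) x)).1) = pr}.Infinite) := by
  classical
  have hO : ∀ i : ℤ, {x : ↥Omix | (R.symm x.val).1 = i}.Infinite := by
    intro i
    refine Set.infinite_of_injective_forall_mem
      (f := fun b : ℕ => (⟨R (i, 2*b+1), by simp [Omix, Nat.even_add_one, parity_simps]⟩ : ↥Omix)) ?_ ?_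
    · intro a b h
      have := congrArg (fun z : ↥Omix => R.symm z.val) h
      simp only [Equiv.symm_apply_apply] at this
      simpa [Prod.ext_iff] using this
    · intro b; simp
  have hOc : ∀ i : ℤ, {x : ↥(Omixᶜ) | (R.symm x.val).1 = i}.Infinite := by
    intro i
    refine Set.infinite_of_injective_forall_mem
      (f := fun b : ℕ => (⟨R (i, 2*b), by simp [Omix]⟩ : ↥(Omixᶜ))) ?_ ?_
    · intro a b h
      have := congrArg (fun z : ↥(Omixᶜ) => R.symm z.val) h
      simp only [Equiv.symm_apply_apply] at this
      simpa [Prod.ext_iff] using this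
    · intro b; simp
  have hT2fib : ∀ i : ℤ, {x : ↥(T2 g) | (R.symm (g⁻¹ x.val)).1 = i}.Infinite := by
    intro i
    refine Set.infinite_of_injective_forall_mem
      (f := fun b : ℕ => (⟨tseq g (Nat.pair (Encodable.encode i) b), tseq_mem_T2 g _⟩ : ↥(T2 g))) ?_ ?_
    · intro a b h
      have h2 := tseq_inj g (congrArg Subtype.val h)
      have := congrArg (fun q => q.unpair.2) h2
      simpa using this
    · intro b
      simp only [Set.mem_setOf_eq]
      rw [tseq_yidx, σs_spec]
  have hT1fib : ∀ j : ℤ, {x : ↥((T2 g)ᶜ) | (R.symm x.val).1 = j}.Infinite := by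
    intro j
    refine Set.infinite_of_injective_forall_mem
      (f := fun b : ℕ => (⟨rseq g (Nat.pair (Encodable.encode j) b), rseq_not_mem_T2 g _⟩ : ↥((T2 g)ᶜ))) ?_ ?_
    · intro a b h
      have h2 := rseq_inj g (congrArg Subtype.val h)
      have := congrArg (fun q => q.unpair.2) h2
      simpa using this
    · intro b
      simp only [Set.mem_setOf_eq]
      rw [rseq_ridx, σs_spec]
  obtain ⟨eO, heO⟩ := part_equiv (fun x : ↥Omix => (R.symm x.val).1) hO
  obtain ⟨eOc, heOc⟩ := part_equiv (fun x : ↥(Omixᶜ) => (R.symm x.val).1) hOc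
  obtain ⟨eT1, heT1⟩ := part_equiv (fun x : ↥((T2 g)ᶜ) => (R.symm x.val).1) hT1fib
  obtain ⟨eT2, heT2⟩ := part_equiv (fun x : ↥(T2 g) => (R.symm (g⁻¹ x.val)).1) hT2fib
  set M₁ : ↥Omix ≃ ↥((T2 g)ᶜ) := eO.symm.trans (mixE.trans eT1) with hM₁
  set M₂ : ↥(Omixᶜ) ≃ ↥(T2 g) := eOc.symm.trans (mixE.trans eT2) with hM₂
  set M₂' : ↥(Omixᶜ) ≃ ↥(((T2 g)ᶜ)ᶜ) := M₂.trans (Equiv.setCongr (compl_compl (T2 g)).symm) with hM₂'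
  set p : Pm := (Equiv.Set.sumCompl Omix).symm.trans
    ((M₁.sumCongr M₂').trans (Equiv.Set.sumCompl ((T2 g)ᶜ))) with hp
  have hpO : ∀ x : ↥Omix, p x.val = (M₁ x).val := by
    intro x
    rw [hp]
    simp only [Equiv.trans_apply]
    rw [Equiv.Set.sumCompl_symm_apply_of_mem x.2]
    simp only [Equiv.sumCongr_apply, Sum.map_inl, Equiv.Set.sumCompl_apply_inl]
  have hpOc : ∀ x : ↥(Omixᶜ), p x.val = (M₂ x).val := by
    intro x
    rw [hp]
    simp only [Equiv.trans_apply]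
    rw [Equiv.Set.sumCompl_symm_apply_of_notMem x.2]
    simp only [Equiv.sumCongr_apply, Sum.map_inr, Equiv.Set.sumCompl_apply_inr]
    rw [hM₂']
    rfl
  refine ⟨p, ?_, ?_⟩
  · rintro ⟨i, j⟩
    refine Set.infinite_of_injective_forall_mem
      (f := fun b : ℕ => ((eO (i, π (j, b))) : ℕ)) ?_ ?_
    · intro a b h
      have h2 := eO.injective (Subtype.val_injective h)
      have h3 := π.injective (congrArg Prod.snd h2)
      exact (congrArg Prod.snd h3)
    · intro b
      simp only [Set.mem_setOf_eq, Prod.mk.injEq]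
      constructor
      · exact heO i (π (j, b))
      · rw [hpO (eO (i, π (j, b)))]
        rw [hM₁]
        simp only [Equiv.trans_apply, Equiv.symm_apply_apply]
        rw [mixE_spec]
        exact heT1 j (π (i, b))
  · rintro ⟨i, j⟩
    refine Set.infinite_of_injective_forall_mem
      (f := fun b : ℕ => g⁻¹ ((eT2 (i, π (j, b))) : ℕ)) ?_ ?_
    · intro a b h
      have h1 := (g⁻¹ : Pm).injective h
      have h2 := eT2.injective (Subtype.val_injective h1)
      have h3 := π.injective (congrArg Prod.snd h2)
      exact (congrArg Prod.snd h3)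
    · intro b
      simp only [Set.mem_setOf_eq, Prod.mk.injEq]
      constructor
      · exact heT2 i (π (j, b))
      · have hz : p ((eOc (j, π (i, b))) : ℕ) = ((eT2 (i, π (j, b))) : ℕ) := by
          rw [hpOc (eOc (j, π (i, b)))]
          rw [hM₂]
          simp only [Equiv.trans_apply, Equiv.symm_apply_apply]
          rw [mixE_spec]
        have : (p⁻¹ * g) (g⁻¹ ((eT2 (i, π (j, b))) : ℕ)) = ((eOc (j, π (i, b))) : ℕ) := by
          rw [Equiv.Perm.mul_apply, Equiv.Perm.apply_inv_self, ← hz, Equiv.Perm.inv_apply_self]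
        rw [this]
        exact heOc j (π (i, b))

-- ===== new: column system and bridges =====
def η : ℕ ≃ ℤ := (Denumerable.eqv ℤ).symm
def ζ : ℤ ≃ ℕ := Denumerable.eqv ℤ

def Bcols : (ℤ × ℕ) ≃ ℕ := (Equiv.prodComm ℤ ℕ).trans ((η.prodCongr ζ).trans R)

lemma Bcols_apply (j : ℤ) (n : ℕ) : Bcols (j, n) = R (η n, ζ j) := rfl

lemma rowp_blockpres (σ : Pm) (h : RowP σ) : ∀ j n, ∃ n', σ (R (j, n)) = R (j, n') := by
  intro j n
  refine ⟨(R.symm (σ (R (j, n)))).2, ?_⟩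
  have h1 := h (R (j, n))
  rw [Equiv.symm_apply_apply] at h1
  conv_lhs => rw [← R.apply_symm_apply (σ (R (j, n)))]
  rw [show R.symm (σ (R (j, n))) = ((R.symm (σ (R (j, n)))).1, (R.symm (σ (R (j, n)))).2) from rfl,
    h1]

lemma colp_blockpres (σ : Pm) (h : ColP σ) : ∀ j n, ∃ n', σ (Bcols (j, n)) = Bcols (j, n') := by
  intro j n
  refine ⟨η.symm (R.symm (σ (Bcols (j, n)))).1, ?_⟩
  have h1 := h (Bcols (j, n))
  rw [Bcols_apply] at h1 ⊢
  rw [Equiv.symm_apply_apply] at h1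
  rw [Bcols_apply, Equiv.apply_symm_apply]
  conv_lhs => rw [← R.apply_symm_apply (σ (R (η n, ζ j)))]
  rw [show R.symm (σ (R (η n, ζ j))) = ((R.symm (σ (R (η n, ζ j)))).1, (R.symm (σ (R (η n, ζ j)))).2)
    from rfl, h1]

-- ===== main theorem =====
theorem main :
    ∀ A : ℕ → Set (Equiv.Perm ℕ), Monotone A → (⋃ m, A m) = Set.univ →
      ∃ m k, A m ^ k = (Set.univ : Set (Equiv.Perm ℕ)) := by
  intro A hmono hcov
  set B : ℕ → Set Pm := fun m => {g | g ∈ A m ∧ g⁻¹ ∈ A m} with hB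
  have hAcov : ∀ g : Pm, ∃ m, g ∈ A m := by
    intro g
    have : g ∈ ⋃ m, A m := by rw [hcov]; trivial
    exact Set.mem_iUnion.mp this
  have hBcov : ∀ g : Pm, ∃ m, g ∈ B m := by
    intro g
    obtain ⟨a, ha⟩ := hAcov g
    obtain ⟨b, hb⟩ := hAcov g⁻¹
    exact ⟨max a b, hmono (le_max_left a b) ha, hmono (le_max_right a b) hb⟩
  have hBmono : Monotone B := by
    intro a b hab g hg
    exact ⟨hmono hab hg.1, hmono hab hg.2⟩
  have hBsym : ∀ m (x : Pm), x ∈ B m → x⁻¹ ∈ B m := by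
    intro m x hx
    exact ⟨hx.2, by simpa using hx.1⟩
  obtain ⟨m₀, i₀, hH⟩ := diagonal B hBcov
  have TEL := telescope_main (B m₀) i₀ hH
  obtain ⟨c₁, c₁', hrows⟩ := conj_factor i₀ R
  obtain ⟨c₂, c₂', hcols⟩ := conj_factor i₀ Bcols
  obtain ⟨m₁, hm₁⟩ := exists_bound B hBmono hBcov
    [t₀ i₀, (t₀ i₀)⁻¹, c₁, c₁⁻¹, c₁', c₁'⁻¹, c₂, c₂⁻¹, c₂', c₂'⁻¹]
  set m := max m₀ m₁ with hm
  have hsub : B m₀ ⊆ B m := hBmono (le_max_left m₀ m₁)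
  have hfix : ∀ x ∈ [t₀ i₀, (t₀ i₀)⁻¹, c₁, c₁⁻¹, c₁', c₁'⁻¹, c₂, c₂⁻¹, c₂', c₂'⁻¹], x ∈ B m :=
    fun x hx => hBmono (le_max_right m₀ m₁) (hm₁ x hx)
  -- the factor handler
  have handle : ∀ (cc cc' : Pm),
      cc ∈ B m → cc' ∈ B m →
      ∀ x : Pm,
      (∃ f f' : ℤ → Pm, ∀ w w' : Pm,
        (∀ i j n, w (N (i, j, n)) = N (i, j, if i = i₀ then f j n else n)) →
        (∀ i j n, w' (N (i, j, n)) = N (i, j, if i = i₀ then f' j n else n)) →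
        x = cc * w * cc⁻¹ * (cc' * w' * cc'⁻¹)) →
      ∃ L : List Pm, L.length = 12 ∧ (∀ y ∈ L, y ∈ B m) ∧ L.prod = x := by
    intro cc cc' hcc hcc' x hfact
    obtain ⟨f, f', hff'⟩ := hfact
    obtain ⟨u, hu, huw⟩ := TEL f
    obtain ⟨u', hu', hu'w⟩ := TEL f'
    have hx := hff' (u * t₀ i₀ * u⁻¹ * (t₀ i₀)⁻¹) (u' * t₀ i₀ * u'⁻¹ * (t₀ i₀)⁻¹) huw hu'w
    refine ⟨[cc, u, t₀ i₀, u⁻¹, (t₀ i₀)⁻¹, cc⁻¹, cc', u', t₀ i₀, u'⁻¹, (t₀ i₀)⁻¹, cc'⁻¹],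
      by simp, ?_, ?_⟩
    · intro y hy
      simp only [List.mem_cons, List.not_mem_nil, or_false] at hy
      rcases hy with h|h|h|h|h|h|h|h|h|h|h|h <;> subst h
      · exact hcc
      · exact hsub hu
      · exact hfix _ (by simp)
      · exact hBsym m u (hsub hu)
      · exact hfix _ (by simp)
      · exact hBsym m cc hcc
      · exact hcc'
      · exact hsub hu'
      · exact hfix _ (by simp)
      · exact hBsym m u' (hsub hu')
      · exact hfix _ (by simp)
      · exact hBsym m cc' hcc'
    · rw [hx]
      simp [List.prod_cons, mul_assoc]
  refine ⟨m, 72, ?_⟩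
  apply Set.eq_of_subset_of_subset (Set.subset_univ _)
  intro g _
  obtain ⟨p, hD1, hD2⟩ := L2 g
  obtain ⟨ρ₁, κ, ρ₂, hpeq, hρ₁, hκ, hρ₂⟩ := L1 p hD1
  obtain ⟨ρ₁', κ', ρ₂', hheq, hρ₁', hκ', hρ₂'⟩ := L1 (p⁻¹ * g) hD2
  obtain ⟨La, hLa12, hLaM, hLaP⟩ := handle c₁ c₁'
    (hfix _ (by simp)) (hfix _ (by simp)) ρ₁ (hrows ρ₁ (rowp_blockpres ρ₁ hρ₁))
  obtain ⟨Lb, hLb12, hLbM, hLbP⟩ := handle c₂ c₂'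
    (hfix _ (by simp)) (hfix _ (by simp)) κ (hcols κ (colp_blockpres κ hκ))
  obtain ⟨Lc, hLc12, hLcM, hLcP⟩ := handle c₁ c₁'
    (hfix _ (by simp)) (hfix _ (by simp)) ρ₂ (hrows ρ₂ (rowp_blockpres ρ₂ hρ₂))
  obtain ⟨Ld, hLd12, hLdM, hLdP⟩ := handle c₁ c₁'
    (hfix _ (by simp)) (hfix _ (by simp)) ρ₁' (hrows ρ₁' (rowp_blockpres ρ₁' hρ₁'))
  obtain ⟨Le, hLe12, hLeM, hLeP⟩ := handle c₂ c₂'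
    (hfix _ (by simp)) (hfix _ (by simp)) κ' (hcols κ' (colp_blockpres κ' hκ'))
  obtain ⟨Lf, hLf12, hLfM, hLfP⟩ := handle c₁ c₁'
    (hfix _ (by simp)) (hfix _ (by simp)) ρ₂' (hrows ρ₂' (rowp_blockpres ρ₂' hρ₂'))
  have hgprod : (La ++ Lb ++ Lc ++ Ld ++ Le ++ Lf).prod = g := by
    simp only [List.prod_append, hLaP, hLbP, hLcP, hLdP, hLeP, hLfP]
    have hg2 : g = ρ₁ * κ * ρ₂ * (ρ₁' * κ' * ρ₂') := by
      rw [← hpeq, ← hheq]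
      group
    rw [hg2]
    group
  have hlen : (La ++ Lb ++ Lc ++ Ld ++ Le ++ Lf).length = 72 := by
    simp [hLa12, hLb12, hLc12, hLd12, hLe12, hLf12]
  have hmem : ∀ y ∈ (La ++ Lb ++ Lc ++ Ld ++ Le ++ Lf), y ∈ B m := by
    intro y hy
    simp only [List.mem_append] at hy
    rcases hy with ((((h|h)|h)|h)|h)|h
    exacts [hLaM y h, hLbM y h, hLcM y h, hLdM y h, hLeM y h, hLfM y h]
  have := list_prod_mem_pow (B m) _ hmem
  rw [hgprod, hlen] at this
  have hBA : B m ⊆ A m := fun x hx => hx.1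
  exact pow_subset_pow hBA 72 this

end
end BergmanAux

/-- Bergman's theorem: `Sym(ℕ)` has uncountable strong
cofinality: for every increasing exhaustion `Sym(ℕ) = ⋃ₘ Aₘ` there are `m, k`
with `Aₘᵏ = Sym(ℕ)`. -/
theorem symNat_uncountable_strong_cofinality :
    ∀ A : ℕ → Set (Equiv.Perm ℕ), Monotone A → (⋃ m, A m) = Set.univ →
      ∃ m k, A m ^ k = (Set.univ : Set (Equiv.Perm ℕ)) := by
  exact BergmanAux.main
end

section
/- Let T be a non-rooted tree (connected acyclic graph), G = Aut(T), and X ⊆ T a finite nonempty set of vertices. If for every vertex t the algebraic closure acl({t}) is finite, then acl(X) is finite. -/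
/-- The algebraic closure of `X` in a graph `Γ`: the set of vertices whose
orbit under the pointwise stabilizer of `X` in `Aut(Γ)` is finite. -/
def graphAcl {V : Type*} (Γ : SimpleGraph V) (X : Set V) : Set V :=
  {t | Set.Finite {u | ∃ g : Equiv.Perm V,
    (∀ a b : V, Γ.Adj (g a) (g b) ↔ Γ.Adj a b) ∧ (∀ x ∈ X, g x = x) ∧ g t = u}}

namespace TreeAclAux

open SimpleGraph

variable {V : Type*} {Γ : SimpleGraph V}

/-- Canonical path (as a walk) between two vertices of a connected graph. -/
noncomputable def pw (hconn : Γ.Connected) (u v : V) : Γ.Walk u v :=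
  letI := Classical.decEq V
  ((hconn.preconnected u v).some).toPath

lemma pw_isPath (hconn : Γ.Connected) (u v : V) : (pw hconn u v).IsPath := by
  letI := Classical.decEq V
  exact (((hconn.preconnected u v).some).toPath).2

lemma eq_pw (hconn : Γ.Connected) (hacyc : Γ.IsAcyclic) {u v : V}
    (w : Γ.Walk u v) (hw : w.IsPath) : w = pw hconn u v := by
  have := hacyc.path_unique ⟨w, hw⟩ ⟨pw hconn u v, pw_isPath hconn u v⟩
  exact congrArg Subtype.val this

lemma pw_support_subset (hconn : Γ.Connected) (hacyc : Γ.IsAcyclic) {u v : V}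
    (w : Γ.Walk u v) : (pw hconn u v).support ⊆ w.support := by
  letI := Classical.decEq V
  have h1 : w.bypass = pw hconn u v := eq_pw hconn hacyc _ w.bypass_isPath
  rw [← h1]
  exact w.support_bypass_subset

/-- The convex hull of `X`: union of supports of canonical paths between points of `X`. -/
def hull (hconn : Γ.Connected) (X : Set V) : Set V :=
  {v | ∃ x ∈ X, ∃ y ∈ X, v ∈ (pw hconn x y).support}

lemma hull_finite (hconn : Γ.Connected) {X : Set V} (hX : X.Finite) :
    (hull hconn X).Finite := by
  have hsub : hull hconn X ⊆ ⋃ x ∈ X, ⋃ y ∈ X, {v | v ∈ (pw hconn x y).support} := by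
    rintro v ⟨x, hx, y, hy, hv⟩
    exact Set.mem_biUnion hx (Set.mem_biUnion hy hv)
  exact Set.Finite.subset
    (hX.biUnion fun x _ => hX.biUnion fun y _ => (pw hconn x y).support.finite_toSet) hsub

lemma mem_hull (hconn : Γ.Connected) {X : Set V} {x : V} (hx : x ∈ X) :
    x ∈ hull hconn X :=
  ⟨x, hx, x, hx, SimpleGraph.Walk.start_mem_support _⟩

/-- Gate lemma: there is a hull vertex `m` through which every walk from `t`
to any point of `X` must pass. -/
lemma gate (hconn : Γ.Connected) (hacyc : Γ.IsAcyclic) {X : Set V} {x0 : V}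
    (hx0 : x0 ∈ X) (t : V) :
    ∃ m ∈ hull hconn X, ∀ z ∈ X, ∀ w : Γ.Walk t z, m ∈ w.support := by
  classical
  suffices h : ∃ m ∈ hull hconn X, ∀ z ∈ X, m ∈ (pw hconn t z).support by
    obtain ⟨m, hm, hmz⟩ := h
    exact ⟨m, hm, fun z hz w => pw_support_subset hconn hacyc w (hmz z hz)⟩
  have main : ∀ n (t : V), (pw hconn t x0).length ≤ n →
      ∃ m ∈ hull hconn X, ∀ z ∈ X, m ∈ (pw hconn t z).support := by
    intro n
    induction n with
    | zero =>
      intro t ht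
      have : t = x0 := SimpleGraph.Walk.eq_of_length_eq_zero (Nat.le_zero.mp ht)
      subst this
      exact ⟨t, mem_hull hconn hx0, fun z _ => SimpleGraph.Walk.start_mem_support _⟩
    | succ n ih =>
      intro t ht
      by_cases hth : t ∈ hull hconn X
      · exact ⟨t, hth, fun z _ => SimpleGraph.Walk.start_mem_support _⟩
      · have htx0 : t ≠ x0 := fun h => hth (h ▸ mem_hull hconn hx0)
        obtain ⟨u, hadj, q, hq⟩ :=
          SimpleGraph.Walk.exists_eq_cons_of_ne htx0 (pw hconn t x0)
        have hpPath : (pw hconn t x0).IsPath := pw_isPath hconn t x0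
        rw [hq, SimpleGraph.Walk.cons_isPath_iff] at hpPath
        obtain ⟨hqPath, htq⟩ := hpPath
        have hqeq : q = pw hconn u x0 := eq_pw hconn hacyc q hqPath
        have hlen : (pw hconn u x0).length ≤ n := by
          rw [← hqeq]
          have h1 : (pw hconn t x0).length = q.length + 1 := by
            rw [hq]; simp
          omega
        obtain ⟨m, hm, hmz⟩ := ih u hlen
        refine ⟨m, hm, fun z hz => ?_⟩
        have hu : u ∈ (pw hconn t z).support := by
          have htz : t ≠ z := fun h => hth (h ▸ mem_hull hconn hz)
          obtain ⟨u', hadj', r', hr⟩ :=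
            SimpleGraph.Walk.exists_eq_cons_of_ne htz (pw hconn t z)
          have hrPath : (pw hconn t z).IsPath := pw_isPath hconn t z
          rw [hr, SimpleGraph.Walk.cons_isPath_iff] at hrPath
          obtain ⟨hr'Path, htr'⟩ := hrPath
          by_cases huu : u' = u
          · subst huu
            rw [hr]
            simp [SimpleGraph.Walk.support_cons]
          · exfalso
            have hdisj : ∀ v, v ∈ q.support → v ∈ r'.support → False := by
              intro v hv1 hv2
              have hp1 : (SimpleGraph.Walk.cons hadj (q.takeUntil v hv1)).IsPath := by
                rw [SimpleGraph.Walk.cons_isPath_iff]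
                exact ⟨hqPath.takeUntil hv1,
                  fun h => htq (SimpleGraph.Walk.support_takeUntil_subset _ hv1 h)⟩
              have hp2 : (SimpleGraph.Walk.cons hadj' (r'.takeUntil v hv2)).IsPath := by
                rw [SimpleGraph.Walk.cons_isPath_iff]
                exact ⟨hr'Path.takeUntil hv2,
                  fun h => htr' (SimpleGraph.Walk.support_takeUntil_subset _ hv2 h)⟩
              have heq : SimpleGraph.Walk.cons hadj (q.takeUntil v hv1)
                  = SimpleGraph.Walk.cons hadj' (r'.takeUntil v hv2) :=
                (eq_pw hconn hacyc _ hp1).trans (eq_pw hconn hacyc _ hp2).symm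
              have h1 : (SimpleGraph.Walk.cons hadj (q.takeUntil v hv1)).getVert 1 = u := by
                rw [SimpleGraph.Walk.getVert_cons_succ, SimpleGraph.Walk.getVert_zero]
              have h2 : (SimpleGraph.Walk.cons hadj' (r'.takeUntil v hv2)).getVert 1 = u' := by
                rw [SimpleGraph.Walk.getVert_cons_succ, SimpleGraph.Walk.getVert_zero]
              apply huu
              rw [← h1, ← h2, heq]
            have hWsupp : ((pw hconn t x0).reverse.append (pw hconn t z)).support
                = (t :: q.support).reverse ++ r'.support := by
              rw [SimpleGraph.Walk.support_append, SimpleGraph.Walk.support_reverse, hq, hr]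
              simp [SimpleGraph.Walk.support_cons]
            have hWPath : ((pw hconn t x0).reverse.append (pw hconn t z)).IsPath := by
              rw [SimpleGraph.Walk.isPath_def, hWsupp, List.nodup_append]
              refine ⟨List.nodup_reverse.mpr ?_, (SimpleGraph.Walk.isPath_def _).mp hr'Path, ?_⟩
              · have h3 : (pw hconn t x0).IsPath := pw_isPath hconn t x0
                rw [hq] at h3
                have := (SimpleGraph.Walk.isPath_def _).mp h3
                simpa [SimpleGraph.Walk.support_cons] using this
              · intro a ha b hb hab; subst hab
                rw [List.mem_reverse] at ha
                rcases List.mem_cons.mp ha with rfl | ha'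
                · exact htr' hb
                · exact hdisj a ha' hb
            have htW : t ∈ ((pw hconn t x0).reverse.append (pw hconn t z)).support := by
              rw [hWsupp]
              simp
            have hWeq := eq_pw hconn hacyc _ hWPath
            rw [hWeq] at htW
            exact hth ⟨x0, hx0, z, hz, htW⟩
        have hsub : (pw hconn u z).support ⊆ (pw hconn t z).support := fun a ha =>
          SimpleGraph.Walk.support_dropUntil_subset _ hu
            (pw_support_subset hconn hacyc _ ha)
        exact hsub (hmz z hz)
  exact main (pw hconn t x0).length t le_rfl

/-! ### Branches -/

/-- The branch at `m` containing `t`: vertices reachable from `t` avoiding `m`. -/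
def branch (Γ : SimpleGraph V) (m t : V) : Set V :=
  {u | ∃ w : Γ.Walk t u, m ∉ w.support}

lemma self_mem_branch {m t : V} (h : t ≠ m) : t ∈ branch Γ m t :=
  ⟨SimpleGraph.Walk.nil, by simp [Ne.symm h]⟩

lemma not_mem_branch (m t : V) : m ∉ branch Γ m t :=
  fun ⟨w, hw⟩ => hw w.end_mem_support

lemma branch_eq {m t u : V} (h : u ∈ branch Γ m t) :
    branch Γ m t = branch Γ m u := by
  obtain ⟨w0, hw0⟩ := h
  ext v
  constructor
  · rintro ⟨w, hw⟩
    refine ⟨w0.reverse.append w, ?_⟩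
    rw [SimpleGraph.Walk.mem_support_append_iff]
    rintro (h | h)
    · rw [SimpleGraph.Walk.support_reverse, List.mem_reverse] at h
      exact hw0 h
    · exact hw h
  · rintro ⟨w, hw⟩
    refine ⟨w0.append w, ?_⟩
    rw [SimpleGraph.Walk.mem_support_append_iff]
    rintro (h | h)
    · exact hw0 h
    · exact hw h

lemma adj_mem_branch {m t u v : V} (hu : u ∈ branch Γ m t) (hadj : Γ.Adj u v)
    (hv : v ≠ m) : v ∈ branch Γ m t := by
  obtain ⟨w, hw⟩ := hu
  refine ⟨w.append (SimpleGraph.Walk.cons hadj SimpleGraph.Walk.nil), ?_⟩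
  rw [SimpleGraph.Walk.mem_support_append_iff]
  rintro (h | h)
  · exact hw h
  · simp only [SimpleGraph.Walk.support_cons, SimpleGraph.Walk.support_nil] at h
    rcases List.mem_cons.mp h with rfl | h'
    · exact hw w.end_mem_support
    · rcases List.mem_singleton.mp h' with rfl
      exact hv rfl

lemma branch_map {g : Equiv.Perm V} (hg : ∀ a b, Γ.Adj (g a) (g b) ↔ Γ.Adj a b)
    {m : V} (hm : g m = m) {t u : V} (hu : u ∈ branch Γ m t) :
    g u ∈ branch Γ m (g t) := by
  obtain ⟨w, hw⟩ := hu
  refine ⟨w.map ⟨(g : V → V), fun h => (hg _ _).mpr h⟩, ?_⟩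
  rw [SimpleGraph.Walk.support_map]
  intro hmem
  obtain ⟨v, hv, hvm⟩ := List.mem_map.mp hmem
  have : v = m := g.injective (by simpa [hm] using hvm)
  exact hw (this ▸ hv)

lemma auto_symm {g : Equiv.Perm V} (hg : ∀ a b, Γ.Adj (g a) (g b) ↔ Γ.Adj a b) :
    ∀ a b, Γ.Adj (g.symm a) (g.symm b) ↔ Γ.Adj a b := by
  intro a b
  have := hg (g.symm a) (g.symm b)
  simpa using this.symm

lemma symm_fix {g : Equiv.Perm V} {m : V} (hm : g m = m) : g.symm m = m := by
  conv_lhs => rw [← hm]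
  exact g.symm_apply_apply m

lemma branch_map_iff {g : Equiv.Perm V} (hg : ∀ a b, Γ.Adj (g a) (g b) ↔ Γ.Adj a b)
    {m : V} (hm : g m = m) (t u : V) :
    u ∈ branch Γ m t ↔ g u ∈ branch Γ m (g t) := by
  constructor
  · exact branch_map hg hm
  · intro h
    have := branch_map (auto_symm hg) (symm_fix hm) h
    simpa using this

lemma branch_eq_or_disjoint (m t s : V) :
    branch Γ m t = branch Γ m s ∨ Disjoint (branch Γ m t) (branch Γ m s) := by
  by_cases h : Disjoint (branch Γ m t) (branch Γ m s)
  · exact Or.inr h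
  · obtain ⟨v, hv1, hv2⟩ := Set.not_disjoint_iff.mp h
    exact Or.inl ((branch_eq hv1).trans (branch_eq hv2).symm)

/-! ### Swap automorphisms -/

open Classical in
/-- Swap the branches `B` and `B'` using `g`, fixing everything else. -/
noncomputable def swapFun (g : Equiv.Perm V) (B B' : Set V) (v : V) : V :=
  if v ∈ B then g v else if v ∈ B' then g.symm v else v

lemma swapFun_of_mem {g : Equiv.Perm V} {B B' : Set V} {v : V} (hv : v ∈ B) :
    swapFun g B B' v = g v := by
  simp [swapFun, hv]

lemma swapFun_of_mem' {g : Equiv.Perm V} {B B' : Set V} {v : V} (hv : v ∉ B)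
    (hv' : v ∈ B') : swapFun g B B' v = g.symm v := by
  simp [swapFun, hv, hv']

lemma swapFun_of_not_mem {g : Equiv.Perm V} {B B' : Set V} {v : V} (hv : v ∉ B)
    (hv' : v ∉ B') : swapFun g B B' v = v := by
  simp [swapFun, hv, hv']

lemma swapFun_left_inv {g : Equiv.Perm V} {B B' : Set V}
    (hBB' : ∀ v, v ∈ B ↔ g v ∈ B') (hdisj : B = B' ∨ Disjoint B B') (v : V) :
    swapFun g.symm B' B (swapFun g B B' v) = v := by
  by_cases hv : v ∈ B
  · rw [swapFun_of_mem hv, swapFun_of_mem ((hBB' v).mp hv)]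
    simp
  · by_cases hv' : v ∈ B'
    · have h1 : g.symm v ∈ B := by
        have := hBB' (g.symm v)
        simp only [Equiv.apply_symm_apply] at this
        exact this.mpr hv'
      have h2 : g.symm v ∉ B' := by
        intro hc
        rcases hdisj with he | hd
        · exact hv (he ▸ hv')
        · exact (Set.disjoint_left.mp hd h1) hc
      rw [swapFun_of_mem' hv hv', swapFun_of_mem' h2 h1]
      simp
    · rw [swapFun_of_not_mem hv hv', swapFun_of_not_mem hv' hv]

lemma swapFun_adj {g : Equiv.Perm V} (hg : ∀ a b, Γ.Adj (g a) (g b) ↔ Γ.Adj a b)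
    {m : V} (hgm : g m = m) {B B' : Set V}
    (hmB : m ∉ B) (hmB' : m ∉ B')
    (hEB : ∀ a b, Γ.Adj a b → a ∈ B → b ∉ B → b = m)
    (hEB' : ∀ a b, Γ.Adj a b → a ∈ B' → b ∉ B' → b = m)
    {a b : V} (hab : Γ.Adj a b) :
    Γ.Adj (swapFun g B B' a) (swapFun g B B' b) := by
  by_cases ha : a ∈ B
  · by_cases hb : b ∈ B
    · rw [swapFun_of_mem ha, swapFun_of_mem hb]
      exact (hg a b).mpr hab
    · have hbm : b = m := hEB a b hab ha hb
      rw [hbm] at hab ⊢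
      rw [swapFun_of_mem ha, swapFun_of_not_mem hmB hmB', ← hgm]
      exact (hg a m).mpr hab
  · by_cases hb : b ∈ B
    · have ham : a = m := hEB b a hab.symm hb ha
      rw [ham] at hab ⊢
      rw [swapFun_of_mem hb, swapFun_of_not_mem hmB hmB', ← hgm]
      exact (hg m b).mpr hab
    · by_cases ha' : a ∈ B'
      · by_cases hb' : b ∈ B'
        · rw [swapFun_of_mem' ha ha', swapFun_of_mem' hb hb']
          exact (auto_symm hg a b).mpr hab
        · have hbm : b = m := hEB' a b hab ha' hb'
          rw [hbm] at hab ⊢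
          rw [swapFun_of_mem' ha ha', swapFun_of_not_mem hmB hmB',
            ← symm_fix hgm]
          exact (auto_symm hg a m).mpr hab
      · by_cases hb' : b ∈ B'
        · have ham : a = m := hEB' b a hab.symm hb' ha'
          rw [ham] at hab ⊢
          rw [swapFun_of_mem' hb hb', swapFun_of_not_mem hmB hmB',
            ← symm_fix hgm]
          exact (auto_symm hg m b).mpr hab
        · rw [swapFun_of_not_mem ha ha', swapFun_of_not_mem hb hb']
          exact hab

/-- Given an automorphism `g` fixing `m`, there is an automorphism `f` agreeing
with `g` at `t` and fixing everything outside `branch m t ∪ branch m (g t)`. -/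
lemma exists_swap {g : Equiv.Perm V} (hg : ∀ a b, Γ.Adj (g a) (g b) ↔ Γ.Adj a b)
    {m : V} (hgm : g m = m) {t : V} (htm : t ≠ m) :
    ∃ f : Equiv.Perm V, (∀ a b, Γ.Adj (f a) (f b) ↔ Γ.Adj a b) ∧ f t = g t ∧
      ∀ v, v ∉ branch Γ m t → v ∉ branch Γ m (g t) → f v = v := by
  set B := branch Γ m t with hB
  set B' := branch Γ m (g t) with hB'
  have hBB' : ∀ v, v ∈ B ↔ g v ∈ B' := fun v => branch_map_iff hg hgm t v
  have hB'B : ∀ v, v ∈ B' ↔ g.symm v ∈ B := by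
    intro v
    have := hBB' (g.symm v)
    simp only [Equiv.apply_symm_apply] at this
    exact this.symm
  have hdisj : B = B' ∨ Disjoint B B' := branch_eq_or_disjoint m t (g t)
  have hdisj' : B' = B ∨ Disjoint B' B := by
    rcases hdisj with he | hd
    · exact Or.inl he.symm
    · exact Or.inr hd.symm
  have hmB : m ∉ B := not_mem_branch m t
  have hmB' : m ∉ B' := not_mem_branch m (g t)
  have hEB : ∀ a b, Γ.Adj a b → a ∈ B → b ∉ B → b = m := by
    intro a b hab ha hb
    by_contra h
    exact hb (adj_mem_branch ha hab h)
  have hEB' : ∀ a b, Γ.Adj a b → a ∈ B' → b ∉ B' → b = m := by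
    intro a b hab ha hb
    by_contra h
    exact hb (adj_mem_branch ha hab h)
  refine ⟨⟨swapFun g B B', swapFun g.symm B' B,
    swapFun_left_inv hBB' hdisj, ?_⟩, ?_, ?_, ?_⟩
  · intro v
    have := swapFun_left_inv (g := g.symm) (B := B') (B' := B) hB'B hdisj' v
    simpa using this
  · intro a b
    simp only [Equiv.coe_fn_mk]
    constructor
    · intro h
      have h2 := swapFun_adj (auto_symm hg) (symm_fix hgm) hmB' hmB hEB' hEB h
      rwa [swapFun_left_inv hBB' hdisj, swapFun_left_inv hBB' hdisj] at h2
    · intro h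
      exact swapFun_adj hg hgm hmB hmB' hEB hEB' h
  · show swapFun g B B' t = g t
    exact swapFun_of_mem (self_mem_branch htm)
  · intro v hv hv'
    show swapFun g B B' v = v
    exact swapFun_of_not_mem hv hv'

/-- Key transfer lemma: if the orbit of `t` under the pointwise stabilizer of
`X` is finite and `m` is a gate of `t` with respect to `X`, then the orbit of
`t` under the stabilizer of `m` is finite. -/
lemma key {X : Set V} (hXfin : X.Finite) {m t : V} (htm : t ≠ m)
    (hgate : ∀ z ∈ X, ∀ w : Γ.Walk t z, m ∈ w.support)
    (hO : Set.Finite {u | ∃ g : Equiv.Perm V,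
      (∀ a b : V, Γ.Adj (g a) (g b) ↔ Γ.Adj a b) ∧ (∀ x ∈ X, g x = x) ∧ g t = u}) :
    Set.Finite {u | ∃ g : Equiv.Perm V,
      (∀ a b : V, Γ.Adj (g a) (g b) ↔ Γ.Adj a b) ∧ g m = m ∧ g t = u} := by
  classical
  set O := {u | ∃ g : Equiv.Perm V,
      (∀ a b : V, Γ.Adj (g a) (g b) ↔ Γ.Adj a b) ∧ (∀ x ∈ X, g x = x) ∧ g t = u} with hOdef
  have hXB : ∀ x ∈ X, x ∉ branch Γ m t := fun x hx ⟨w, hw⟩ => hw (hgate x hx w)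
  have core : ∀ g : Equiv.Perm V, (∀ a b, Γ.Adj (g a) (g b) ↔ Γ.Adj a b) →
      g m = m → (∀ x ∈ X, x ∉ branch Γ m (g t)) → g t ∈ O := by
    intro g hg hgm hX'
    obtain ⟨f, hf, hft, hfid⟩ := exists_swap hg hgm htm
    exact ⟨f, hf, fun x hx => hfid x (hXB x hx) (hX' x hx), hft⟩
  have cover : {u | ∃ g : Equiv.Perm V,
      (∀ a b : V, Γ.Adj (g a) (g b) ↔ Γ.Adj a b) ∧ g m = m ∧ g t = u} ⊆
      O ∪ ⋃ z ∈ X, {u | (∃ g : Equiv.Perm V,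
        (∀ a b : V, Γ.Adj (g a) (g b) ↔ Γ.Adj a b) ∧ g m = m ∧ g t = u) ∧
        u ∈ branch Γ m z} := by
    rintro u ⟨g, hg, hgm, rfl⟩
    by_cases hz : ∃ z ∈ X, g t ∈ branch Γ m z
    · obtain ⟨z, hz1, hz2⟩ := hz
      exact Or.inr (Set.mem_biUnion hz1 ⟨⟨g, hg, hgm, rfl⟩, hz2⟩)
    · refine Or.inl (core g hg hgm ?_)
      intro x hx hxB'
      apply hz
      refine ⟨x, hx, ?_⟩
      have hgtm : g t ≠ m := fun h => htm (g.injective (h.trans hgm.symm))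
      rw [← branch_eq hxB']
      exact self_mem_branch hgtm
  refine Set.Finite.subset (hO.union (Set.Finite.biUnion hXfin fun z _ => ?_)) cover
  by_cases hne : {u | (∃ g : Equiv.Perm V,
      (∀ a b : V, Γ.Adj (g a) (g b) ↔ Γ.Adj a b) ∧ g m = m ∧ g t = u) ∧
      u ∈ branch Γ m z}.Nonempty
  · obtain ⟨u0, ⟨g0, hg0, hg0m, hg0t⟩, hu0⟩ := hne
    apply Set.Finite.subset (hO.image g0)
    rintro u ⟨⟨g, hg, hgm, rfl⟩, hub⟩
    have hcompauto : ∀ a b, Γ.Adj ((g.trans g0.symm) a) ((g.trans g0.symm) b) ↔ Γ.Adj a b := by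
      intro a b
      simp only [Equiv.trans_apply]
      rw [auto_symm hg0]
      exact hg a b
    have hcompm : (g.trans g0.symm) m = m := by
      simp only [Equiv.trans_apply, hgm]
      exact symm_fix hg0m
    have hht : (g.trans g0.symm) t ∈ branch Γ m t := by
      have h1 : branch Γ m z = branch Γ m (g0 t) := by
        rw [hg0t]
        exact branch_eq hu0
      rw [h1] at hub
      have h2 := branch_map (auto_symm hg0) (symm_fix hg0m) hub
      simp only [Equiv.symm_apply_apply] at h2
      exact h2
    have hO' : (g.trans g0.symm) t ∈ O := by
      apply core _ hcompauto hcompm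
      intro x hx hxB
      rw [← branch_eq hht] at hxB
      exact hXB x hx hxB
    refine ⟨(g.trans g0.symm) t, hO', ?_⟩
    simp [Equiv.trans_apply]
  · rw [Set.not_nonempty_iff_eq_empty] at hne
    rw [hne]
    exact Set.finite_empty

end TreeAclAux

/-- in a tree (connected acyclic graph), if `acl({t})` is finite
for every vertex `t`, then `acl(X)` is finite for every finite nonempty set of
vertices `X`. -/
theorem tree_acl_finite_of_singletons
    (V : Type*) (Γ : SimpleGraph V) (hconn : Γ.Connected) (hacyc : Γ.IsAcyclic)
    (X : Set V) (hXfin : X.Finite) (hXne : X.Nonempty)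
    (h : ∀ t : V, (graphAcl Γ {t}).Finite) :
    (graphAcl Γ X).Finite := by
  classical
  obtain ⟨x0, hx0⟩ := hXne
  have hsub : graphAcl Γ X ⊆ ⋃ m ∈ TreeAclAux.hull hconn X, graphAcl Γ {m} := by
    intro t ht
    obtain ⟨m, hm, hgate⟩ := TreeAclAux.gate hconn hacyc hx0 t
    refine Set.mem_biUnion hm ?_
    simp only [graphAcl, Set.mem_setOf_eq] at ht ⊢
    by_cases htm : t = m
    · subst htm
      apply Set.Finite.subset (Set.finite_singleton t)
      rintro u ⟨g, hg, hfix, rfl⟩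
      simp [hfix t rfl]
    · have hkey := TreeAclAux.key hXfin htm hgate ht
      apply Set.Finite.subset hkey
      rintro u ⟨g, hg, hfix, rfl⟩
      exact ⟨g, hg, hfix m rfl, rfl⟩
  exact Set.Finite.subset
    (Set.Finite.biUnion (TreeAclAux.hull_finite hconn hXfin) fun m _ => h m) hsub
end

section
/- Let T be a countable rooted tree, G = Aut(T), f : A → B an isomorphism between finite substructures of T (preserving the predecessor function and the orbit-predicates P_t), and t ∈ T \ A an immediate successor of some a ∈ A. Then there exists t' ∈ T such that f ∪ {(t, t')} is again an isomorphism of finite substructures. Consequently, the structure (T, p, {P_t}) is ultrahomogeneous: every isomorphism between finite substructures extends to an automorphism of T. -/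
set_option linter.unusedSectionVars false

namespace RTU

variable {T : Type*} [DecidableEq T] {p : T → T} {r : T}

lemma aut_iter {g : Equiv.Perm T} (hg : ∀ x, g (p x) = p (g x)) :
    ∀ (n : ℕ) (x : T), g (p^[n] x) = p^[n] (g x) := by
  intro n
  induction n with
  | zero => intro x; rfl
  | succ n ih =>
    intro x
    rw [Function.iterate_succ_apply, Function.iterate_succ_apply, ih, hg]

lemma fixed_eq_root (hreach : ∀ t : T, ∃ n : ℕ, p^[n] t = r)
    {x : T} (hx : p x = x) : x = r := by
  obtain ⟨n, hn⟩ := hreach x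
  rwa [Function.iterate_fixed hx] at hn

lemma aut_root (hroot : p r = r) (hreach : ∀ t : T, ∃ n : ℕ, p^[n] t = r)
    {g : Equiv.Perm T} (hg : ∀ x, g (p x) = p (g x)) : g r = r :=
  fixed_eq_root hreach (by rw [← hg, hroot])

lemma symm_comm {g : Equiv.Perm T} (hg : ∀ x, g (p x) = p (g x)) :
    ∀ x, g.symm (p x) = p (g.symm x) := by
  intro x
  apply g.injective
  rw [Equiv.apply_symm_apply, hg, Equiv.apply_symm_apply]

noncomputable def depth (hreach : ∀ t : T, ∃ n : ℕ, p^[n] t = r) (t : T) : ℕ :=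
  Nat.find (hreach t)

lemma depth_spec (hreach : ∀ t : T, ∃ n : ℕ, p^[n] t = r) (t : T) :
    p^[depth hreach t] t = r := Nat.find_spec (hreach t)

lemma depth_le (hreach : ∀ t : T, ∃ n : ℕ, p^[n] t = r) {t : T} {n : ℕ}
    (h : p^[n] t = r) : depth hreach t ≤ n := Nat.find_min' (hreach t) h

lemma depth_eq_zero (hreach : ∀ t : T, ∃ n : ℕ, p^[n] t = r) {t : T} :
    depth hreach t = 0 ↔ t = r := by
  constructor
  · intro h
    have := depth_spec hreach t
    rwa [h] at this
  · rintro rfl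
    exact Nat.le_zero.mp (depth_le hreach (by simp))

lemma depth_succ (hreach : ∀ t : T, ∃ n : ℕ, p^[n] t = r) {t : T} (ht : t ≠ r) :
    depth hreach t = depth hreach (p t) + 1 := by
  have h1 : depth hreach t ≤ depth hreach (p t) + 1 :=
    depth_le hreach (by rw [Function.iterate_succ_apply]; exact depth_spec hreach (p t))
  have h0 : depth hreach t ≠ 0 := fun h => ht ((depth_eq_zero hreach).mp h)
  have h2 : depth hreach (p t) + 1 ≤ depth hreach t := by
    obtain ⟨m, hm⟩ : ∃ m, depth hreach t = m + 1 :=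
      ⟨depth hreach t - 1, by omega⟩
    have hsp := depth_spec hreach t
    rw [hm, Function.iterate_succ_apply] at hsp
    have := depth_le hreach hsp
    omega
  omega

lemma aut_depth (hroot : p r = r) (hreach : ∀ t : T, ∃ n : ℕ, p^[n] t = r)
    {g : Equiv.Perm T} (hg : ∀ x, g (p x) = p (g x)) (x : T) :
    depth hreach (g x) = depth hreach x := by
  apply le_antisymm
  · apply depth_le
    rw [← aut_iter hg, depth_spec, aut_root hroot hreach hg]
  · apply depth_le
    have h1 := depth_spec hreach (g x)
    have h2 : g (p^[depth hreach (g x)] x) = g r := by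
      rw [aut_iter hg, h1, aut_root hroot hreach hg]
    exact g.injective h2

lemma sub_depth (hroot : p r = r) (hreach : ∀ t : T, ∃ n : ℕ, p^[n] t = r)
    {s : T} (hs : s ≠ r) :
    ∀ (n : ℕ) (x : T), p^[n] x = s → depth hreach x = depth hreach s + n := by
  intro n
  induction n with
  | zero => intro x h; simp only [Function.iterate_zero, id] at h; subst h; simp
  | succ n ih =>
    intro x h
    have hx : x ≠ r := by
      rintro rfl
      exact hs (by rw [← h, Function.iterate_fixed hroot])
    rw [Function.iterate_succ_apply] at h
    rw [depth_succ hreach hx, ih (p x) h]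
    omega

lemma no_cycle (hroot : p r = r) (hreach : ∀ t : T, ∃ n : ℕ, p^[n] t = r)
    {x : T} {n : ℕ} (h : p^[n] x = x) (hn : 0 < n) : x = r := by
  by_contra hx
  have := sub_depth hroot hreach hx n x h
  omega

lemma sub_of_sub_p {u x : T} {m : ℕ} (h : p^[m] (p x) = u) : p^[m + 1] x = u := by
  rw [Function.iterate_succ_apply]; exact h

/-- The subtree-swap lemma: given an automorphism `g0` and `s ≠ r` with
`p (g0 s) = p s`, there is an automorphism sending `s` to `g0 s` which fixes
everything outside the subtrees rooted at `s` and `g0 s`. -/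
lemma swap_aut (hroot : p r = r) (hreach : ∀ t : T, ∃ n : ℕ, p^[n] t = r)
    {g0 : Equiv.Perm T} (hg0 : ∀ x, g0 (p x) = p (g0 x))
    {s : T} (hs : s ≠ r) (hpar : p (g0 s) = p s) :
    ∃ h : Equiv.Perm T, (∀ x, h (p x) = p (h x)) ∧ h s = g0 s ∧
      ∀ x, (∀ n, p^[n] x ≠ s) → (∀ n, p^[n] x ≠ g0 s) → h x = x := by
  classical
  by_cases hss : g0 s = s
  · exact ⟨1, fun x => rfl, by simp [hss], fun x _ _ => rfl⟩
  have hds' : depth hreach (g0 s) = depth hreach s := aut_depth hroot hreach hg0 s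
  have hs'r : g0 s ≠ r := by
    intro h
    rw [h, (depth_eq_zero hreach).mpr rfl] at hds'
    exact hs ((depth_eq_zero hreach).mp hds'.symm)
  have hd0 : depth hreach s ≠ 0 := fun h => hs ((depth_eq_zero hreach).mp h)
  -- disjointness of subtrees
  have disj : ∀ x : T, (∃ n, p^[n] x = s) → (∃ n, p^[n] x = g0 s) → False := by
    rintro x ⟨n, hn⟩ ⟨m, hm⟩
    have h1 := sub_depth hroot hreach hs n x hn
    have h2 := sub_depth hroot hreach hs'r m x hm
    have hnm : n = m := by omega
    exact hss (by rw [← hm, ← hnm, hn])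
  have mapS : ∀ x : T, (∃ n, p^[n] x = s) → (∃ n, p^[n] (g0 x) = g0 s) := by
    rintro x ⟨n, hn⟩
    exact ⟨n, by rw [← aut_iter hg0, hn]⟩
  have mapS' : ∀ x : T, (∃ n, p^[n] x = g0 s) → (∃ n, p^[n] (g0.symm x) = s) := by
    rintro x ⟨n, hn⟩
    refine ⟨n, ?_⟩
    rw [← aut_iter (symm_comm hg0), hn, Equiv.symm_apply_apply]
  set F : T → T := fun x =>
    if ∃ n, p^[n] x = s then g0 x else if ∃ n, p^[n] x = g0 s then g0.symm x else x
    with hF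
  have hinv : Function.Involutive F := by
    intro x
    by_cases h1 : ∃ n, p^[n] x = s
    · have h2 : ∃ n, p^[n] (g0 x) = g0 s := mapS x h1
      have h3 : ¬ ∃ n, p^[n] (g0 x) = s := fun h => disj _ h h2
      rw [hF]
      simp only
      rw [if_pos h1, if_neg h3, if_pos h2, Equiv.symm_apply_apply]
    · by_cases h2 : ∃ n, p^[n] x = g0 s
      · have h3 : ∃ n, p^[n] (g0.symm x) = s := mapS' x h2
        rw [hF]
        simp only
        rw [if_neg h1, if_pos h2, if_pos h3, Equiv.apply_symm_apply]
      · rw [hF]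
        simp only
        rw [if_neg h1, if_neg h2, if_neg h1, if_neg h2]
  -- p s is outside both subtrees
  have hpsS : ¬ ∃ n, p^[n] (p s) = s := by
    rintro ⟨m, hm⟩
    exact hs (no_cycle hroot hreach (sub_of_sub_p hm) (Nat.succ_pos m))
  have hpsS' : ¬ ∃ n, p^[n] (p s) = g0 s := by
    rintro ⟨m, hm⟩
    have h1 := sub_depth hroot hreach hs'r m (p s) hm
    have h2 := depth_succ hreach hs
    omega
  have hFs : F s = g0 s := by rw [hF]; simp only; rw [if_pos ⟨0, rfl⟩]
  have hcomm : ∀ x, F (p x) = p (F x) := by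
    intro x
    by_cases h1 : ∃ n, p^[n] x = s
    · by_cases hxs : x = s
      · subst hxs
        rw [hFs, hpar, hF]
        simp only
        rw [if_neg hpsS, if_neg hpsS']
      · obtain ⟨n, hn⟩ := h1
        have hn0 : n ≠ 0 := by rintro rfl; exact hxs hn
        have hpx : ∃ m, p^[m] (p x) = s := by
          obtain ⟨m, rfl⟩ : ∃ m, n = m + 1 := ⟨n - 1, by omega⟩
          rw [Function.iterate_succ_apply] at hn
          exact ⟨m, hn⟩
        rw [hF]
        simp only
        rw [if_pos hpx, if_pos ⟨n, hn⟩, hg0]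
    · by_cases h2 : ∃ n, p^[n] x = g0 s
      · by_cases hxs : x = g0 s
        · subst hxs
          have hFx : F (g0 s) = g0.symm (g0 s) := by
            rw [hF]; simp only
            rw [if_neg (fun h => disj _ h ⟨0, rfl⟩), if_pos ⟨0, rfl⟩]
          rw [hFx, Equiv.symm_apply_apply, hpar, hF]
          simp only
          rw [if_neg hpsS, if_neg hpsS']
        · obtain ⟨n, hn⟩ := h2
          have hn0 : n ≠ 0 := by rintro rfl; exact hxs hn
          have hpx : ∃ m, p^[m] (p x) = g0 s := by
            obtain ⟨m, rfl⟩ : ∃ m, n = m + 1 := ⟨n - 1, by omega⟩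
            rw [Function.iterate_succ_apply] at hn
            exact ⟨m, hn⟩
          have hpx1 : ¬ ∃ m, p^[m] (p x) = s := fun h => disj _ h hpx
          rw [hF]
          simp only
          rw [if_neg hpx1, if_pos hpx, if_neg h1, if_pos ⟨n, hn⟩, symm_comm hg0]
      · have hp1 : ¬ ∃ m, p^[m] (p x) = s := by
          rintro ⟨m, hm⟩; exact h1 ⟨m + 1, sub_of_sub_p hm⟩
        have hp2 : ¬ ∃ m, p^[m] (p x) = g0 s := by
          rintro ⟨m, hm⟩; exact h2 ⟨m + 1, sub_of_sub_p hm⟩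
        rw [hF]
        simp only
        rw [if_neg hp1, if_neg hp2, if_neg h1, if_neg h2]
  refine ⟨hinv.toPerm F, hcomm, hFs, ?_⟩
  intro x hx1 hx2
  show F x = x
  rw [hF]
  simp only
  rw [if_neg (by push_neg; exact hx1), if_neg (by push_neg; exact hx2)]

/-- Every isomorphism of finite substructures extends to an automorphism. -/
lemma extend_aut (hroot : p r = r) (hreach : ∀ t : T, ∃ n : ℕ, p^[n] t = r) :
    ∀ (n : ℕ) (A : Set T), A.Finite → A.ncard ≤ n → (∀ a ∈ A, p a ∈ A) →
    ∀ f : T → T, Set.InjOn f A → (∀ a ∈ A, f (p a) = p (f a)) →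
    (∀ a ∈ A, ∃ g : Equiv.Perm T, (∀ x, g (p x) = p (g x)) ∧ g a = f a) →
    ∃ g : Equiv.Perm T, (∀ x, g (p x) = p (g x)) ∧ ∀ x ∈ A, g x = f x := by
  intro n
  induction n with
  | zero =>
    intro A hfin hcard _ f _ _ _
    have hA : A = ∅ := (Set.ncard_eq_zero hfin).mp (Nat.le_zero.mp hcard)
    exact ⟨1, fun x => rfl, by simp [hA]⟩
  | succ n ih =>
    intro A hfin hcard hcl f hinj hfp hforb
    rcases Set.eq_empty_or_nonempty A with rfl | hne
    · exact ⟨1, fun x => rfl, by simp⟩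
    obtain ⟨a, haA, hamax⟩ : ∃ a ∈ A, ∀ x ∈ A, depth hreach x ≤ depth hreach a := by
      obtain ⟨a, ha, hmax⟩ := hfin.toFinset.exists_max_image (depth hreach)
        (by simpa using hne)
      exact ⟨a, by simpa using ha, fun x hx => hmax x (by simpa using hx)⟩
    by_cases hsing : ∀ x ∈ A, x = a
    · obtain ⟨g, hg, hga⟩ := hforb a haA
      refine ⟨g, hg, fun x hx => ?_⟩
      rw [hsing x hx]; exact hga
    · push_neg at hsing
      obtain ⟨b, hbA, hba⟩ := hsing
      have har : a ≠ r := by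
        rintro rfl
        have hb0 : depth hreach b = 0 := by
          have := hamax b hbA
          rw [(depth_eq_zero hreach).mpr rfl] at this
          omega
        exact hba ((depth_eq_zero hreach).mp hb0)
      have hpa : p a ≠ a := fun h => har (fixed_eq_root hreach h)
      set A' : Set T := A \ {a} with hA'
      have hA'fin : A'.Finite := hfin.diff
      have hA'card : A'.ncard ≤ n := by
        have h := Set.ncard_diff_singleton_lt_of_mem haA hfin
        rw [← hA'] at h
        omega
      have hA'sub : A' ⊆ A := Set.diff_subset
      have hpaA' : p a ∈ A' := ⟨hcl a haA, hpa⟩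
      have hA'cl : ∀ x ∈ A', p x ∈ A' := by
        rintro x ⟨hxA, hxa⟩
        refine ⟨hcl x hxA, ?_⟩
        intro hpx
        have h1 : p^[1] x = a := by simpa using hpx
        have h2 := sub_depth hroot hreach har 1 x h1
        have h3 := hamax x hxA
        omega
      obtain ⟨g, hg, hgf⟩ := ih A' hA'fin hA'card hA'cl f (hinj.mono hA'sub)
        (fun x hx => hfp x (hA'sub hx)) (fun x hx => hforb x (hA'sub hx))
      obtain ⟨g1, hg1, hg1a⟩ := hforb a haA
      -- s = g a, s' = f a
      have hps : p (g a) = p (f a) := by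
        rw [← hg a, hgf (p a) hpaA', hfp a haA]
      have hsr : g a ≠ r := by
        intro h
        have : a = r := by
          have := aut_root hroot hreach (symm_comm hg)
          calc a = g.symm (g a) := (Equiv.symm_apply_apply g a).symm
            _ = g.symm r := by rw [h]
            _ = r := this
        exact har this
      set g0 : Equiv.Perm T := g.symm.trans g1 with hg0def
      have hg0 : ∀ x, g0 (p x) = p (g0 x) := by
        intro x
        simp only [hg0def, Equiv.trans_apply]
        rw [symm_comm hg, hg1]
      have hg0s : g0 (g a) = f a := by
        simp only [hg0def, Equiv.trans_apply, Equiv.symm_apply_apply]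
        exact hg1a
      have hpar : p (g0 (g a)) = p (g a) := by rw [hg0s, ← hps]
      obtain ⟨h, hhc, hhs, hhfix⟩ := swap_aut hroot hreach hg0 hsr hpar
      refine ⟨g.trans h, ?_, ?_⟩
      · intro x
        simp only [Equiv.trans_apply]
        rw [hg, hhc]
      · intro x hxA
        simp only [Equiv.trans_apply]
        by_cases hxa : x = a
        · subst hxa
          rw [hhs, hg0s]
        · have hxA' : x ∈ A' := ⟨hxA, hxa⟩
          obtain ⟨gx, hgx, hgxa⟩ := hforb x hxA
          have hdfx : depth hreach (f x) = depth hreach x := by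
            rw [← hgxa, aut_depth hroot hreach hgx]
          have hdga : depth hreach (g a) = depth hreach a := aut_depth hroot hreach hg a
          have hdxa : depth hreach x ≤ depth hreach a := hamax x hxA
          have hnot1 : ∀ m, p^[m] (f x) ≠ g a := by
            intro m hm
            have h1 := sub_depth hroot hreach hsr m (f x) hm
            have hm0 : m = 0 := by omega
            rw [hm0] at hm
            simp only [Function.iterate_zero, id] at hm
            have : g x = g a := by rw [hgf x hxA', hm]
            exact hxa (g.injective this)
          have hnot2 : ∀ m, p^[m] (f x) ≠ g0 (g a) := by
            intro m hm
            rw [hg0s] at hm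
            have hfar : f a ≠ r := by
              intro hfa
              obtain ⟨ga', hga', hga'a⟩ := hforb a haA
              have : depth hreach a = 0 := by
                rw [← aut_depth hroot hreach hga' a, hga'a, hfa]
                exact (depth_eq_zero hreach).mpr rfl
              exact har ((depth_eq_zero hreach).mp this)
            have h1 := sub_depth hroot hreach hfar m (f x) hm
            have hdfa : depth hreach (f a) = depth hreach a := by
              rw [← hg1a, aut_depth hroot hreach hg1]
            have hm0 : m = 0 := by omega
            rw [hm0] at hm
            simp only [Function.iterate_zero, id] at hm
            exact hxa (hinj hxA haA hm)
          rw [hgf x hxA', hhfix (f x) hnot1 hnot2]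

end RTU

/-- extension step and ultrahomogeneity for countable rooted
trees. A rooted tree is given by a predecessor function `p` with root `r`.
Automorphisms are permutations commuting with `p`; an isomorphism of finite
substructures (sets closed under `p`) is a bijection preserving `p` and the
orbit-predicates (each point is mapped into its own `Aut(T)`-orbit). Given such
an `f : A → B` and an immediate successor `t ∉ A` of some `a ∈ A`, there is a
`t'` such that `f ∪ {(t, t')}` is again such an isomorphism; consequently every
isomorphism of finite substructures extends to an automorphism of `T`. -/
theorem rooted_tree_ultrahomogeneous
    (T : Type*) [Countable T] [DecidableEq T] (p : T → T) (r : T)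
    (hroot : p r = r) (hreach : ∀ t : T, ∃ n : ℕ, p^[n] t = r)
    (A B : Set T) (hAfin : A.Finite) (hBfin : B.Finite)
    (hAcl : ∀ a ∈ A, p a ∈ A) (hBcl : ∀ b ∈ B, p b ∈ B)
    (f : T → T) (hbij : Set.BijOn f A B)
    (hfp : ∀ a ∈ A, f (p a) = p (f a))
    (hforb : ∀ a ∈ A, ∃ g : Equiv.Perm T, (∀ x, g (p x) = p (g x)) ∧ g a = f a)
    (t : T) (htA : t ∉ A) (a : T) (haA : a ∈ A) (hpt : p t = a) :
    (∃ t' : T, t' ∉ B ∧ p t' = f a ∧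
      (∃ g : Equiv.Perm T, (∀ x, g (p x) = p (g x)) ∧ g t = t') ∧
      Set.BijOn (Function.update f t t') (A ∪ {t}) (B ∪ {t'})) ∧
    (∃ g : Equiv.Perm T, (∀ x, g (p x) = p (g x)) ∧ ∀ x ∈ A, g x = f x) := by
  obtain ⟨g, hg, hgf⟩ := RTU.extend_aut hroot hreach A.ncard A hAfin le_rfl hAcl f
    hbij.injOn hfp hforb
  refine ⟨⟨g t, ?_, ?_, ⟨g, hg, rfl⟩, ?_⟩, ⟨g, hg, hgf⟩⟩
  · intro hB
    rw [← hbij.image_eq] at hB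
    obtain ⟨x, hxA, hx⟩ := hB
    have : g x = g t := by rw [hgf x hxA, hx]
    exact htA (g.injective this ▸ hxA)
  · rw [← hg t, hpt]
    exact hgf a haA
  · have heq : Set.EqOn g (Function.update f t (g t)) (A ∪ {t}) := by
      intro x hx
      rcases hx with hxA | hxt
      · rw [Function.update_of_ne (by rintro rfl; exact htA hxA), hgf x hxA]
      · rcases hxt with rfl
        rw [Function.update_self]
    have himg : g '' (A ∪ {t}) = B ∪ {g t} := by
      rw [Set.image_union, Set.image_singleton]
      congr 1
      rw [← hbij.image_eq]
      exact Set.image_congr (fun x hx => hgf x hx)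
    have hbij' : Set.BijOn g (A ∪ {t}) (B ∪ {g t}) :=
      himg ▸ g.injective.injOn.bijOn_image
    exact hbij'.congr heq
end
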